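/- arXiv:2110.10725 — 5 statements merged into one kernel-verified Lean document; each statement's English description precedes it below -/
import Mathlib

section
/- Let U be the multi-slice in [m]^n determined by a vector k = (k₁,…,k_m) of nonnegative integers summing to n (vectors with exactly k_j coordinates equal to j). A function f : U → ℝ is a J-junta (depends only on coordinates in J ⊆ [n]) if and only if f(π·x) = f(x) for every permutation π ∈ S_n fixing J pointwise and every x ∈ U. -/
/-- The action of `S_n` on `[m]^n` permuting coordinates: `(π·x)_i = x_{π(i)}`. -/
def act {n m : ℕ} (π : Equiv.Perm (Fin n)) (x : Fin n → Fin m) : Fin n → Fin m :=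
  fun i => x (π i)

/-- Membership in the multi-slice `U_k ⊆ [m]^n`: exactly `k j` coordinates equal `j`. -/
def inSlice {n m : ℕ} (k : Fin m → ℕ) (x : Fin n → Fin m) : Prop :=
  ∀ j, (Finset.univ.filter fun i => x i = j).card = k j

/-- If `x` and `x'` have the same value-counts and agree on `J`, there is a permutation
fixing `J` pointwise matching `x'` to `x`. -/
lemma matching_perm (n m : ℕ) (J : Finset (Fin n)) (x x' : Fin n → Fin m)
    (hJ : ∀ i ∈ J, x i = x' i)
    (hc : ∀ j, (Finset.univ.filter fun i => x i = j).card
             = (Finset.univ.filter fun i => x' i = j).card) :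
    ∃ π : Equiv.Perm (Fin n), (∀ i ∈ J, π i = i) ∧ ∀ i, x' (π i) = x i := by
  have hcompl : ∀ j : Fin m,
      Fintype.card {a : {i : Fin n // i ∉ J} // x a.1 = j}
      = Fintype.card {a : {i : Fin n // i ∉ J} // x' a.1 = j} := by
    intro j
    have h1 := Finset.card_filter_add_card_filter_not
      (s := Finset.univ.filter fun i => x i = j) (p := fun i => i ∈ J)
    have h2 := Finset.card_filter_add_card_filter_not
      (s := Finset.univ.filter fun i => x' i = j) (p := fun i => i ∈ J)
    rw [Finset.filter_filter, Finset.filter_filter] at h1 h2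
    have hin : (Finset.univ.filter fun i => x i = j ∧ i ∈ J)
        = (Finset.univ.filter fun i => x' i = j ∧ i ∈ J) := by
      apply Finset.filter_congr; intro i _
      constructor <;> rintro ⟨h, hi⟩ <;>
        exact ⟨by rw [hJ i hi] at *; assumption, hi⟩
    have hcj := hc j
    have e1 : (Finset.univ.filter fun i => x i = j ∧ i ∉ J).card
        = (Finset.univ.filter fun i => x' i = j ∧ i ∉ J).card := by
      rw [hin] at h1; omega
    calc Fintype.card {a : {i : Fin n // i ∉ J} // x a.1 = j}
        = Fintype.card {i : Fin n // i ∉ J ∧ x i = j} :=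
          Fintype.card_congr
            (Equiv.subtypeSubtypeEquivSubtypeInter (fun i => i ∉ J) (fun i => x i = j))
      _ = (Finset.univ.filter fun i => i ∉ J ∧ x i = j).card :=
          Fintype.card_subtype _
      _ = (Finset.univ.filter fun i => i ∉ J ∧ x' i = j).card := by
          simpa [and_comm] using e1
      _ = Fintype.card {i : Fin n // i ∉ J ∧ x' i = j} :=
          (Fintype.card_subtype _).symm
      _ = Fintype.card {a : {i : Fin n // i ∉ J} // x' a.1 = j} :=
          (Fintype.card_congr
            (Equiv.subtypeSubtypeEquivSubtypeInter (fun i => i ∉ J) (fun i => x' i = j))).symm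
  have fibers : ∀ j : Fin m,
      ((fun a : {i : Fin n // i ∉ J} => x a.1) ⁻¹' {j})
        ≃ ((fun a : {i : Fin n // i ∉ J} => x' a.1) ⁻¹' {j}) := by
    intro j
    classical
    apply Fintype.equivOfCardEq
    simpa [Set.preimage, Set.mem_singleton_iff, Fintype.card_subtype] using hcompl j
  let e : {i : Fin n // i ∉ J} ≃ {i : Fin n // i ∉ J} := Equiv.ofFiberEquiv fibers
  have he : ∀ a : {i : Fin n // i ∉ J}, x' (e a).1 = x a.1 := fun a =>
    Equiv.ofFiberEquiv_map fibers a
  refine ⟨Equiv.Perm.subtypeCongr (p := fun i => i ∈ J) (Equiv.refl _) e, ?_, ?_⟩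
  · intro i hi
    exact Equiv.Perm.subtypeCongr.left_apply (Equiv.refl _) e hi
  · intro i
    by_cases hi : i ∈ J
    · rw [Equiv.Perm.subtypeCongr.left_apply (Equiv.refl _) e hi]
      simp [hJ i hi]
    · rw [Equiv.Perm.subtypeCongr.right_apply (Equiv.refl _) e hi]
      exact he ⟨i, hi⟩

lemma inSlice_act {n m : ℕ} (k : Fin m → ℕ) (π : Equiv.Perm (Fin n))
    (x : Fin n → Fin m) (hx : inSlice k x) : inSlice k (act π x) := by
  intro j
  rw [← hx j]
  apply Finset.card_bij' (fun i _ => π i) (fun i _ => π.symm i) <;> simp [Finset.mem_filter] <;> simp [act]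

/-- A function on the multi-slice `U_k` is a `J`-junta (depends only on the
coordinates in `J`) iff it is invariant under every permutation fixing `J` pointwise. -/
theorem junta_iff_invariant (n m : ℕ) (k : Fin m → ℕ) (hk : ∑ j, k j = n)
    (J : Finset (Fin n)) (f : (Fin n → Fin m) → ℝ) :
    (∃ g : (J → Fin m) → ℝ, ∀ x, inSlice k x → f x = g (fun i => x i.1)) ↔
      (∀ π : Equiv.Perm (Fin n), (∀ i ∈ J, π i = i) →
        ∀ x, inSlice k x → f (act π x) = f x) := by
  constructor
  · rintro ⟨g, hg⟩ π hπ x hx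
    rw [hg x hx, hg (act π x) (inSlice_act k π x hx)]
    congr 1
    funext i
    simp [act, hπ i.1 i.2]
  · intro hinv
    classical
    refine ⟨fun y => if h : ∃ x, inSlice k x ∧ ∀ i : J, x i.1 = y i
      then f h.choose else 0, ?_⟩
    intro x hx
    have hex : ∃ z, inSlice k z ∧ ∀ i : J, z i.1 = x i.1 :=
      ⟨x, hx, fun _ => rfl⟩
    simp only [dif_pos hex]
    obtain ⟨hz1, hz2⟩ := hex.choose_spec
    set z := hex.choose
    obtain ⟨π, hπJ, hπ⟩ := matching_perm n m J x z
      (fun i hi => (hz2 ⟨i, hi⟩).symm)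
      (fun j => by rw [hx j, hz1 j])
    have : act π z = x := funext hπ
    rw [← this]
    exact hinv π hπJ z hz1
end

section
/- Let U be a multi-slice in [m]^n for k = (k₁,…,k_m). Every real-valued function on U lies in the span of (n − k₁)-juntas; that is, V_n(U) = V_{n−k₁}(U), where V_d(U) denotes the linear span of functions depending on at most d coordinates. -/
/-- A `d`-junta on the multi-slice: a function depending on at most `d` coordinates. -/
def IsJunta {n m : ℕ} {k : Fin m → ℕ} (d : ℕ)
    (f : {x : Fin n → Fin m // inSlice k x} → ℝ) : Prop :=
  ∃ A : Finset (Fin n), A.card ≤ d ∧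
    ∀ x y : {x : Fin n → Fin m // inSlice k x},
      (∀ i ∈ A, x.1 i = y.1 i) → f x = f y

/-- If `y` agrees with `x` on all coordinates where `x` is nonzero, then `y = x`. -/
lemma agree_eq {n m : ℕ} (hm : 0 < m) {k : Fin m → ℕ}
    (x y : {x : Fin n → Fin m // inSlice k x})
    (h : ∀ i, x.1 i ≠ ⟨0, hm⟩ → y.1 i = x.1 i) : y = x := by
  classical
  apply Subtype.ext; funext i
  by_cases hx : x.1 i = ⟨0, hm⟩
  · by_contra hne
    set j := y.1 i with hjdef
    have hj : j ≠ ⟨0, hm⟩ := by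
      intro hj0
      exact hne (by rw [hj0, hx])
    have hsub : (Finset.univ.filter fun i' => x.1 i' = j) ⊆
        (Finset.univ.filter fun i' => y.1 i' = j) := by
      intro i' hi'
      simp only [Finset.mem_filter, Finset.mem_univ, true_and] at hi' ⊢
      rw [h i' (by rw [hi']; exact hj)]; exact hi'
    have hcard : (Finset.univ.filter fun i' => y.1 i' = j).card ≤
        (Finset.univ.filter fun i' => x.1 i' = j).card := by
      rw [x.2 j, y.2 j]
    have heq := Finset.eq_of_subset_of_card_le hsub hcard
    have hmem : i ∈ (Finset.univ.filter fun i' => y.1 i' = j) := by simp [hjdef]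
    rw [← heq] at hmem
    simp only [Finset.mem_filter, Finset.mem_univ, true_and] at hmem
    exact hj (hmem ▸ hx)
  · exact h i hx

/-- Every real-valued function on the multi-slice `U_k ⊆ [m]^n` lies in the span of
`(n − k₁)`-juntas, i.e. `V_n(U_k) = V_{n−k₁}(U_k)`. -/
theorem span_juntas_top (n m : ℕ) (hm : 0 < m) (k : Fin m → ℕ) (hk : ∑ j, k j = n) :
    Submodule.span ℝ
        {f : {x : Fin n → Fin m // inSlice k x} → ℝ | IsJunta (n - k ⟨0, hm⟩) f} = ⊤ := by
  classical
  haveI : Fintype {x : Fin n → Fin m // inSlice k x} := Fintype.ofFinite _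
  rw [eq_top_iff]
  intro f _
  have hf : f = ∑ x, Pi.single x (f x) := (Finset.univ_sum_single f).symm
  rw [hf]
  apply Submodule.sum_mem
  intro x _
  have hsingle : Pi.single x (f x) =
      (f x) • (Pi.single x 1 : {x : Fin n → Fin m // inSlice k x} → ℝ) := by
    funext y
    by_cases hy : y = x <;> simp [hy, Pi.single_apply]
  rw [hsingle]
  apply Submodule.smul_mem
  apply Submodule.subset_span
  refine ⟨Finset.univ.filter fun i => x.1 i ≠ ⟨0, hm⟩, ?_, ?_⟩
  · have h0 := x.2 ⟨0, hm⟩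
    have hsplit := Finset.card_filter_add_card_filter_not
      (s := (Finset.univ : Finset (Fin n))) (p := fun i => x.1 i = ⟨0, hm⟩)
    simp only [Finset.card_univ, Fintype.card_fin] at hsplit
    have hle : k ⟨0, hm⟩ ≤ n :=
      hk ▸ Finset.single_le_sum (fun j _ => Nat.zero_le (k j)) (Finset.mem_univ _)
    simp only [ne_eq]
    omega
  · intro y z hyz
    simp only [Finset.mem_filter, Finset.mem_univ, true_and] at hyz
    by_cases hy : y = x
    · have hz : z = x := by
        apply agree_eq hm
        intro i hi
        rw [← hyz i hi, hy]
      rw [hy, hz]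
    · have hz : z ≠ x := by
        intro hz
        apply hy
        apply agree_eq hm
        intro i hi
        rw [hyz i hi, hz]
      simp [Pi.single_apply, hy, hz]
end

section
/- Let (Ω₁,ν₁),…,(Ωₙ,νₙ) be finite probability spaces and let ν = ν₁×…×νₙ. For i = 1,…,n, let μᵢ be a probability distribution on Ωᵢ×Ωᵢ with both marginals νᵢ, and suppose the second-largest singular value of the Markov operator T_{μᵢ} on L²(Ωᵢ,νᵢ) is at most 1−β. Let T = T_{μ₁}⊗…⊗T_{μₙ}. Then for every f ∈ L²(Ωⁿ, ν) orthogonal to all functions depending on at most d coordinates, ‖Tf‖₂ ≤ (1−β)^d ‖f‖₂. -/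
open Finset Function

namespace TMC
noncomputable section
set_option linter.unusedSectionVars false

section Aux
variable {n : ℕ} {Ω : Fin n → Type*} [∀ i, Fintype (Ω i)] [∀ i, DecidableEq (Ω i)]
variable (ν : ∀ i, Ω i → ℝ) (μ : ∀ i, Ω i × Ω i → ℝ)

/-- weight of a point -/
def wgt (x : ∀ i, Ω i) : ℝ := ∏ i, ν i (x i)

/-- inner product -/
def inr (f g : (∀ i, Ω i) → ℝ) : ℝ := ∑ x, wgt ν x * f x * g x

/-- squared norm -/
def nrm2 (f : (∀ i, Ω i) → ℝ) : ℝ := inr ν f f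

/-- averaging in coordinate i -/
def Eop (i : Fin n) (f : (∀ i, Ω i) → ℝ) (x : ∀ i, Ω i) : ℝ :=
  ∑ a, ν i a * f (Function.update x i a)

/-- Markov operator in coordinate i -/
def Top (i : Fin n) (f : (∀ i, Ω i) → ℝ) (x : ∀ i, Ω i) : ℝ :=
  ∑ a, (μ i (a, x i) / ν i (x i)) * f (Function.update x i a)

/-- full tensor operator -/
def Tfull (f : (∀ i, Ω i) → ℝ) (y : ∀ i, Ω i) : ℝ :=
  ∑ x, (∏ i, μ i (x i, y i) / ν i (y i)) * f x

/-- Efron–Stein kernel -/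
def kerS (S : Finset (Fin n)) (x z : ∀ i, Ω i) : ℝ :=
  ∏ i, if i ∈ S then ((if z i = x i then (1:ℝ) else 0) - ν i (z i)) else ν i (z i)

/-- Efron–Stein component -/
def fes (S : Finset (Fin n)) (f : (∀ i, Ω i) → ℝ) (x : ∀ i, Ω i) : ℝ :=
  ∑ z, kerS ν S x z * f z

/-- composition of the Top's for coordinates < k -/
def comp : ℕ → ((∀ i, Ω i) → ℝ) → ((∀ i, Ω i) → ℝ)
  | 0, f => f
  | (k+1), f => if h : k < n then Top ν μ ⟨k, h⟩ (comp k f) else comp k f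

/-- interpolation formula -/
def Pk (k : ℕ) (f : (∀ i, Ω i) → ℝ) (y : ∀ i, Ω i) : ℝ :=
  ∑ x, (∏ i, if i.1 < k then μ i (x i, y i) / ν i (y i)
      else (if x i = y i then (1:ℝ) else 0)) * f x

variable {ν μ}

lemma prod_update (F : ∀ i, Ω i → ℝ) (x : ∀ i, Ω i) (i₀ : Fin n) (a : Ω i₀) :
    ∏ i, F i (Function.update x i₀ a i) = F i₀ a * ∏ i ∈ univ.erase i₀, F i (x i) := by
  rw [← Finset.mul_prod_erase _ _ (mem_univ i₀), Function.update_self]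
  congr 1
  refine Finset.prod_congr rfl fun i hi => ?_
  rw [Function.update_of_ne (Finset.ne_of_mem_erase hi)]

lemma prod_split (F : ∀ i, Ω i → ℝ) (x : ∀ i, Ω i) (i₀ : Fin n) :
    ∏ i, F i (x i) = F i₀ (x i₀) * ∏ i ∈ univ.erase i₀, F i (x i) :=
  (Finset.mul_prod_erase _ _ (mem_univ i₀)).symm

lemma sum_update_swap (i : Fin n) (H : (∀ j, Ω j) → Ω i → ℝ) :
    ∑ x, ∑ a, H x a = ∑ x, ∑ a, H (Function.update x i a) (x i) := by
  rw [← Fintype.sum_prod_type', ← Fintype.sum_prod_type']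
  refine (Fintype.sum_equiv ⟨fun p => (Function.update p.1 i p.2, p.1 i),
    fun p => (Function.update p.1 i p.2, p.1 i), ?_, ?_⟩
    (fun p => H (Function.update p.1 i p.2) (p.1 i)) (fun p => H p.1 p.2) ?_).symm
  · rintro ⟨x, a⟩
    simp [Function.update_idem]
  · rintro ⟨x, a⟩
    simp [Function.update_idem]
  · rintro ⟨x, a⟩
    simp


lemma wgt_pos (hν : ∀ i a, 0 < ν i a) (x : ∀ i, Ω i) : 0 < wgt ν x :=
  Finset.prod_pos fun i _ => hν i (x i)

lemma wgt_update_mul (x : ∀ i, Ω i) (i : Fin n) (a : Ω i) :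
    wgt ν (Function.update x i a) * ν i (x i) = wgt ν x * ν i a := by
  rw [wgt, wgt, prod_update (fun j u => ν j u) x i a, prod_split (fun j u => ν j u) x i]
  ring

lemma sum_wgt_Eop (hνsum : ∀ i, ∑ a, ν i a = 1) (i : Fin n) (f : (∀ i, Ω i) → ℝ) :
    ∑ x, wgt ν x * Eop ν i f x = ∑ x, wgt ν x * f x := by
  unfold Eop
  simp_rw [Finset.mul_sum]
  rw [sum_update_swap i (fun x a => wgt ν x * (ν i a * f (Function.update x i a)))]
  refine Finset.sum_congr rfl fun x _ => ?_
  have h1 : ∀ a : Ω i, Function.update (Function.update x i a) i (x i) = x := fun a => by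
    rw [Function.update_idem, Function.update_eq_self]
  simp_rw [h1]
  have h2 : ∀ a : Ω i, wgt ν (Function.update x i a) * (ν i (x i) * f x)
      = (wgt ν x * f x) * ν i a := fun a => by
    calc wgt ν (Function.update x i a) * (ν i (x i) * f x)
        = (wgt ν (Function.update x i a) * ν i (x i)) * f x := by ring
      _ = (wgt ν x * ν i a) * f x := by rw [wgt_update_mul]
      _ = (wgt ν x * f x) * ν i a := by ring
  simp_rw [h2]
  rw [← Finset.mul_sum, hνsum, mul_one]

lemma Eop_update_self (i : Fin n) (f : (∀ i, Ω i) → ℝ) (x : ∀ i, Ω i) (a : Ω i) :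
    Eop ν i f (Function.update x i a) = Eop ν i f x := by
  unfold Eop; simp_rw [Function.update_idem]

lemma Eop_Eop (hνsum : ∀ i, ∑ a, ν i a = 1) (i : Fin n) (f : (∀ i, Ω i) → ℝ) (x : ∀ i, Ω i) :
    Eop ν i (Eop ν i f) x = Eop ν i f x := by
  rw [Eop]
  simp_rw [Eop_update_self]
  rw [← Finset.sum_mul, hνsum, one_mul]

lemma Eop_of_indep (hνsum : ∀ i, ∑ a, ν i a = 1) {i : Fin n} {f : (∀ i, Ω i) → ℝ}
    (hh : ∀ x a, f (Function.update x i a) = f x) (x : ∀ i, Ω i) : Eop ν i f x = f x := by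
  unfold Eop; simp_rw [hh]
  rw [← Finset.sum_mul, hνsum, one_mul]

lemma inr_comm (f g : (∀ i, Ω i) → ℝ) : inr ν f g = inr ν g f :=
  Finset.sum_congr rfl fun x _ => by rw [mul_assoc, mul_assoc, mul_comm (f x)]

lemma inr_eq_zero_of (hνsum : ∀ i, ∑ a, ν i a = 1) (i : Fin n) {g h : (∀ i, Ω i) → ℝ}
    (hg : ∀ x, Eop ν i g x = 0) (hh : ∀ x a, h (Function.update x i a) = h x) :
    inr ν g h = 0 := by
  have e1 : inr ν g h = ∑ x, wgt ν x * (fun x => g x * h x) x :=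
    Finset.sum_congr rfl fun x _ => mul_assoc _ _ _
  rw [e1, ← sum_wgt_Eop hνsum i]
  have e2 : ∀ x, Eop ν i (fun x => g x * h x) x = h x * Eop ν i g x := fun x => by
    unfold Eop
    rw [Finset.mul_sum]
    exact Finset.sum_congr rfl fun a _ => by simp only []; rw [hh]; ring
  simp [e2, hg]


lemma Top_of_indep (hν : ∀ i a, 0 < ν i a) (hmarg2 : ∀ i y, (∑ x, μ i (x, y)) = ν i y)
    {i : Fin n} {g : (∀ i, Ω i) → ℝ} (hh : ∀ x a, g (Function.update x i a) = g x)
    (x : ∀ i, Ω i) : Top ν μ i g x = g x := by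
  unfold Top; simp_rw [hh]
  rw [← Finset.sum_mul, ← Finset.sum_div, hmarg2, div_self (hν i (x i)).ne', one_mul]

lemma Top_indep_of_indep {i j : Fin n} (hij : j ≠ i) {g : (∀ i, Ω i) → ℝ}
    (hh : ∀ x a, g (Function.update x i a) = g x) (x : ∀ i, Ω i) (a : Ω i) :
    Top ν μ j g (Function.update x i a) = Top ν μ j g x := by
  unfold Top
  refine Finset.sum_congr rfl fun b _ => ?_
  rw [Function.update_of_ne hij, Function.update_comm hij.symm, hh]

lemma Eop_Top_comm {i j : Fin n} (hij : i ≠ j) (g : (∀ i, Ω i) → ℝ) (x : ∀ i, Ω i) :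
    Eop ν i (Top ν μ j g) x = Top ν μ j (Eop ν i g) x := by
  unfold Eop Top
  simp_rw [Function.update_of_ne hij.symm, Function.update_comm hij, Finset.mul_sum]
  rw [Finset.sum_comm]
  exact Finset.sum_congr rfl fun b _ => Finset.sum_congr rfl fun a _ => by ring

lemma Eop_Top_self (hν : ∀ i a, 0 < ν i a) (hmarg1 : ∀ i x, (∑ y, μ i (x, y)) = ν i x)
    (i : Fin n) (g : (∀ i, Ω i) → ℝ) (x : ∀ i, Ω i) :
    Eop ν i (Top ν μ i g) x = Eop ν i g x := by
  unfold Eop Top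
  simp_rw [Function.update_idem, Function.update_self, Finset.mul_sum]
  rw [Finset.sum_comm]
  refine Finset.sum_congr rfl fun a _ => ?_
  have : ∀ b : Ω i, ν i b * (μ i (a, b) / ν i b * g (Function.update x i a))
      = μ i (a, b) * g (Function.update x i a) := fun b => by
    rw [← mul_assoc, mul_div_cancel₀ _ (hν i b).ne']
  simp_rw [this]
  rw [← Finset.sum_mul, hmarg1]

lemma Top_apply_sum {γ : Type*} (𝒮 : Finset γ) (F : γ → (∀ i, Ω i) → ℝ) (i : Fin n)
    (y : ∀ i, Ω i) :
    Top ν μ i (fun x => ∑ S ∈ 𝒮, F S x) y = ∑ S ∈ 𝒮, Top ν μ i (F S) y := by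
  unfold Top
  simp_rw [Finset.mul_sum]
  rw [Finset.sum_comm]

lemma Top_apply_addmul (g h : (∀ i, Ω i) → ℝ) (c : ℝ) (i : Fin n) (y : ∀ i, Ω i) :
    Top ν μ i (fun x => g x + c * h x) y = Top ν μ i g y + c * Top ν μ i h y := by
  unfold Top
  simp_rw [mul_add, Finset.sum_add_distrib, Finset.mul_sum]
  congr 1
  exact Finset.sum_congr rfl fun a _ => by ring

lemma nrm2_eq (f : (∀ i, Ω i) → ℝ) : nrm2 ν f = ∑ x, wgt ν x * f x ^ 2 :=
  Finset.sum_congr rfl fun x _ => by rw [mul_assoc, ← sq]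

lemma nrm2_nonneg (hν : ∀ i a, 0 < ν i a) (f : (∀ i, Ω i) → ℝ) : 0 ≤ nrm2 ν f := by
  rw [nrm2_eq]
  exact Finset.sum_nonneg fun x _ => mul_nonneg (wgt_pos hν x).le (sq_nonneg _)

lemma eq_zero_of_nrm2 (hν : ∀ i a, 0 < ν i a) {f : (∀ i, Ω i) → ℝ}
    (h : nrm2 ν f = 0) (x : ∀ i, Ω i) : f x = 0 := by
  rw [nrm2_eq] at h
  have := (Finset.sum_eq_zero_iff_of_nonneg
    (fun x _ => mul_nonneg (wgt_pos hν x).le (sq_nonneg (f x)))).mp h x (Finset.mem_univ x)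
  have h2 : f x ^ 2 = 0 := by
    rcases mul_eq_zero.mp this with h' | h'
    · exact absurd h' (wgt_pos hν x).ne'
    · exact h'
  exact (pow_eq_zero_iff (by norm_num : (2:ℕ) ≠ 0)).mp h2

lemma Eop_apply_addmul (g h : (∀ i, Ω i) → ℝ) (c : ℝ) (i : Fin n) (y : ∀ i, Ω i) :
    Eop ν i (fun x => g x + c * h x) y = Eop ν i g y + c * Eop ν i h y := by
  unfold Eop
  simp_rw [mul_add, Finset.sum_add_distrib, Finset.mul_sum]
  congr 1
  exact Finset.sum_congr rfl fun a _ => by ring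

lemma nrm2_add (u v : (∀ i, Ω i) → ℝ) :
    nrm2 ν (fun x => u x + v x) = nrm2 ν u + 2 * inr ν u v + nrm2 ν v := by
  unfold nrm2 inr
  have : ∀ x : ∀ i, Ω i, wgt ν x * (u x + v x) * (u x + v x)
      = wgt ν x * u x * u x + 2 * (wgt ν x * u x * v x) + wgt ν x * v x * v x :=
    fun x => by ring
  simp_rw [this]
  rw [Finset.sum_add_distrib, Finset.sum_add_distrib, ← Finset.mul_sum]

lemma nrm2_Top_le_of_mean_zero {β : ℝ} (hν : ∀ i a, 0 < ν i a)
    (hνsum : ∀ i, ∑ a, ν i a = 1)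
    (hgap : ∀ (i : Fin n) (g : Ω i → ℝ), (∑ a, ν i a * g a) = 0 →
      Real.sqrt (∑ b, ν i b * ((∑ a, μ i (a, b) * g a) / ν i b) ^ 2) ≤
        (1 - β) * Real.sqrt (∑ a, ν i a * g a ^ 2))
    (i : Fin n) {g : (∀ i, Ω i) → ℝ} (hg : ∀ x, Eop ν i g x = 0) :
    nrm2 ν (Top ν μ i g) ≤ (1 - β) ^ 2 * nrm2 ν g := by
  rw [nrm2_eq, nrm2_eq]
  have key : ∀ x, Eop ν i (fun y => (Top ν μ i g y) ^ 2) x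
      ≤ (1 - β) ^ 2 * Eop ν i (fun y => (g y) ^ 2) x := by
    intro x
    have hG0 : ∑ a, ν i a * g (Function.update x i a) = 0 := hg x
    have h1 := hgap i (fun a => g (Function.update x i a)) hG0
    have h2 : ∀ b : Ω i, Top ν μ i g (Function.update x i b)
        = (∑ a, μ i (a, b) * g (Function.update x i a)) / ν i b := by
      intro b
      unfold Top
      simp_rw [Function.update_idem, Function.update_self]
      rw [Finset.sum_div]
      exact Finset.sum_congr rfl fun a _ => div_mul_eq_mul_div _ _ _
    have hA : (0:ℝ) ≤ ∑ b, ν i b *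
        ((∑ a, μ i (a, b) * g (Function.update x i a)) / ν i b) ^ 2 :=
      Finset.sum_nonneg fun b _ => mul_nonneg (hν i b).le (sq_nonneg _)
    have hB : (0:ℝ) ≤ ∑ a, ν i a * g (Function.update x i a) ^ 2 :=
      Finset.sum_nonneg fun a _ => mul_nonneg (hν i a).le (sq_nonneg _)
    have h3 := mul_self_le_mul_self (Real.sqrt_nonneg _) h1
    rw [Real.mul_self_sqrt hA] at h3
    have h4 : ((1 - β) * Real.sqrt (∑ a, ν i a * g (Function.update x i a) ^ 2)) *
        ((1 - β) * Real.sqrt (∑ a, ν i a * g (Function.update x i a) ^ 2))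
        = (1 - β) ^ 2 * ∑ a, ν i a * g (Function.update x i a) ^ 2 := by
      rw [mul_mul_mul_comm, Real.mul_self_sqrt hB, ← sq]
    rw [h4] at h3
    calc Eop ν i (fun y => (Top ν μ i g y) ^ 2) x
        = ∑ b, ν i b * ((∑ a, μ i (a, b) * g (Function.update x i a)) / ν i b) ^ 2 := by
          unfold Eop; exact Finset.sum_congr rfl fun b _ => by simp only [h2]
      _ ≤ (1 - β) ^ 2 * ∑ a, ν i a * g (Function.update x i a) ^ 2 := h3
      _ = (1 - β) ^ 2 * Eop ν i (fun y => (g y) ^ 2) x := rfl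
  calc ∑ x, wgt ν x * (Top ν μ i g x) ^ 2
      = ∑ x, wgt ν x * Eop ν i (fun y => (Top ν μ i g y) ^ 2) x := by
        rw [sum_wgt_Eop hνsum i (fun y => (Top ν μ i g y) ^ 2)]
    _ ≤ ∑ x, wgt ν x * ((1 - β) ^ 2 * Eop ν i (fun y => (g y) ^ 2) x) :=
        Finset.sum_le_sum fun x _ => mul_le_mul_of_nonneg_left (key x) (wgt_pos hν x).le
    _ = (1 - β) ^ 2 * ∑ x, wgt ν x * Eop ν i (fun y => (g y) ^ 2) x := by
        rw [Finset.mul_sum]; exact Finset.sum_congr rfl fun x _ => by ring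
    _ = (1 - β) ^ 2 * ∑ x, wgt ν x * g x ^ 2 := by
        rw [sum_wgt_Eop hνsum i (fun y => (g y) ^ 2)]

lemma nrm2_Top_le {β : ℝ} (hν : ∀ i a, 0 < ν i a) (hνsum : ∀ i, ∑ a, ν i a = 1)
    (hmarg1 : ∀ i x, (∑ y, μ i (x, y)) = ν i x)
    (hmarg2 : ∀ i y, (∑ x, μ i (x, y)) = ν i y)
    (hgap : ∀ (i : Fin n) (g : Ω i → ℝ), (∑ a, ν i a * g a) = 0 →
      Real.sqrt (∑ b, ν i b * ((∑ a, μ i (a, b) * g a) / ν i b) ^ 2) ≤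
        (1 - β) * Real.sqrt (∑ a, ν i a * g a ^ 2))
    (hβ0 : 0 ≤ β) (hβ1 : β ≤ 1)
    (i : Fin n) (g : (∀ i, Ω i) → ℝ) :
    nrm2 ν (Top ν μ i g) ≤ nrm2 ν g := by
  classical
  set e : (∀ i, Ω i) → ℝ := Eop ν i g with he
  set h : (∀ i, Ω i) → ℝ := fun x => g x + (-1) * e x with hhdef
  have he_indep : ∀ x a, e (Function.update x i a) = e x := fun x a =>
    Eop_update_self i g x a
  have hh0 : ∀ x, Eop ν i h x = 0 := by
    intro x
    rw [hhdef, Eop_apply_addmul g e (-1) i x, ← he]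
    have : Eop ν i e x = e x := Eop_Eop hνsum i g x
    rw [this]; ring
  have hTe : ∀ y, Top ν μ i e y = e y := Top_of_indep hν hmarg2 he_indep
  have hTg : ∀ y, Top ν μ i g y = Top ν μ i h y + e y := by
    intro y
    have := Top_apply_addmul (ν := ν) (μ := μ) g e (-1) i y
    rw [← hhdef] at this
    rw [this, hTe]; ring
  have hcross1 : inr ν (Top ν μ i h) e = 0 := by
    refine inr_eq_zero_of hνsum i (fun x => ?_) he_indep
    rw [Eop_Top_self hν hmarg1 i h x, hh0]
  have hcross2 : inr ν h e = 0 := inr_eq_zero_of hνsum i hh0 he_indep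
  have hg_eq : ∀ x, g x = h x + e x := fun x => by rw [hhdef]; ring
  have e1 : nrm2 ν (Top ν μ i g) = nrm2 ν (Top ν μ i h) + nrm2 ν e := by
    have : nrm2 ν (Top ν μ i g) = nrm2 ν (fun y => Top ν μ i h y + e y) := by
      unfold nrm2 inr
      exact Finset.sum_congr rfl fun y _ => by rw [hTg]
    rw [this, nrm2_add, hcross1]; ring
  have e2 : nrm2 ν g = nrm2 ν h + nrm2 ν e := by
    have : nrm2 ν g = nrm2 ν (fun x => h x + e x) := by
      unfold nrm2 inr
      exact Finset.sum_congr rfl fun y _ => by rw [hg_eq]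
    rw [this, nrm2_add, hcross2]; ring
  have e3 : nrm2 ν (Top ν μ i h) ≤ nrm2 ν h := by
    refine le_trans (nrm2_Top_le_of_mean_zero hν hνsum hgap i hh0) ?_
    have hsq : (1 - β) ^ 2 ≤ 1 := by nlinarith
    nlinarith [nrm2_nonneg hν h]
  rw [e1, e2]
  linarith

lemma kerS_update (S : Finset (Fin n)) (x z : ∀ i, Ω i) (i : Fin n) (a : Ω i) :
    kerS ν S (Function.update x i a) z
      = (if i ∈ S then ((if z i = a then (1:ℝ) else 0) - ν i (z i)) else ν i (z i)) *
        ∏ j ∈ univ.erase i, (if j ∈ S then ((if z j = x j then (1:ℝ) else 0) - ν j (z j))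
          else ν j (z j)) :=
  prod_update (fun j u => if j ∈ S then ((if z j = u then (1:ℝ) else 0) - ν j (z j))
    else ν j (z j)) x i a

lemma kerS_split (S : Finset (Fin n)) (x z : ∀ i, Ω i) (i : Fin n) :
    kerS ν S x z
      = (if i ∈ S then ((if z i = x i then (1:ℝ) else 0) - ν i (z i)) else ν i (z i)) *
        ∏ j ∈ univ.erase i, (if j ∈ S then ((if z j = x j then (1:ℝ) else 0) - ν j (z j))
          else ν j (z j)) :=
  prod_split (fun j u => if j ∈ S then ((if z j = u then (1:ℝ) else 0) - ν j (z j))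
    else ν j (z j)) x i

lemma fes_indep {S : Finset (Fin n)} {i : Fin n} (hiS : i ∉ S) (f : (∀ i, Ω i) → ℝ)
    (x : ∀ i, Ω i) (a : Ω i) : fes ν S f (Function.update x i a) = fes ν S f x := by
  unfold fes
  refine Finset.sum_congr rfl fun z _ => ?_
  rw [kerS_update, kerS_split S x z i, if_neg hiS, if_neg hiS]

lemma Eop_fes (hνsum : ∀ i, ∑ a, ν i a = 1) {S : Finset (Fin n)} {i : Fin n} (hiS : i ∈ S)
    (f : (∀ i, Ω i) → ℝ) (x : ∀ i, Ω i) : Eop ν i (fes ν S f) x = 0 := by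
  unfold Eop fes
  simp_rw [Finset.mul_sum]
  rw [Finset.sum_comm]
  refine Finset.sum_eq_zero fun z _ => ?_
  simp_rw [kerS_update S x z i, if_pos hiS]
  set C : ℝ := (∏ j ∈ univ.erase i, (if j ∈ S then ((if z j = x j then (1:ℝ) else 0)
      - ν j (z j)) else ν j (z j))) * f z with hC
  have : ∀ a : Ω i, ν i a * (((if z i = a then (1:ℝ) else 0) - ν i (z i)) *
      (∏ j ∈ univ.erase i, (if j ∈ S then ((if z j = x j then (1:ℝ) else 0) - ν j (z j))
        else ν j (z j))) * f z)
      = (if z i = a then ν i a else 0) * C - ν i a * (ν i (z i) * C) := by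
    intro a
    rw [hC]
    by_cases h : z i = a
    · rw [if_pos h, if_pos h]; ring
    · rw [if_neg h, if_neg h]; ring
  simp_rw [this]
  rw [Finset.sum_sub_distrib, ← Finset.sum_mul,
    Finset.sum_ite_eq univ (z i) (fun a => ν i a), if_pos (mem_univ (z i))]
  simp_rw [← mul_assoc]
  rw [← Finset.sum_mul, ← Finset.sum_mul, hνsum]
  ring

lemma fes_junta (S : Finset (Fin n)) (f : (∀ i, Ω i) → ℝ) (x y : ∀ i, Ω i)
    (hxy : ∀ j ∈ S, x j = y j) : fes ν S f x = fes ν S f y := by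
  unfold fes
  refine Finset.sum_congr rfl fun z _ => ?_
  congr 1
  refine Finset.prod_congr rfl fun j _ => ?_
  by_cases h : j ∈ S
  · rw [if_pos h, if_pos h, hxy j h]
  · rw [if_neg h, if_neg h]

lemma prod_ind (x z : ∀ i, Ω i) :
    (∏ i, if z i = x i then (1:ℝ) else 0) = if z = x then 1 else 0 := by
  by_cases h : z = x
  · subst h; simp
  · rw [if_neg h]
    obtain ⟨i, hi⟩ := Function.ne_iff.mp h
    exact Finset.prod_eq_zero (mem_univ i) (if_neg hi)

lemma sum_kerS (hνsum : ∀ i, ∑ a, ν i a = 1) (x z : ∀ i, Ω i) :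
    ∑ S : Finset (Fin n), kerS ν S x z = if z = x then 1 else 0 := by
  have step1 : ∀ S : Finset (Fin n), kerS ν S x z
      = (∏ i ∈ S, ((if z i = x i then (1:ℝ) else 0) - ν i (z i))) *
        ∏ i ∈ univ \ S, ν i (z i) := by
    intro S
    unfold kerS
    have h1 : (∏ i ∈ S, ((if z i = x i then (1:ℝ) else 0) - ν i (z i)))
        = ∏ i ∈ S, (if i ∈ S then ((if z i = x i then (1:ℝ) else 0) - ν i (z i))
          else ν i (z i)) :=
      Finset.prod_congr rfl fun i hi => (if_pos hi).symm
    have h2 : (∏ i ∈ univ \ S, ν i (z i))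
        = ∏ i ∈ univ \ S, (if i ∈ S then ((if z i = x i then (1:ℝ) else 0) - ν i (z i))
          else ν i (z i)) :=
      Finset.prod_congr rfl fun i hi => (if_neg (Finset.mem_sdiff.mp hi).2).symm
    rw [h1, h2, ← Finset.prod_union Finset.disjoint_sdiff,
      Finset.union_sdiff_of_subset (Finset.subset_univ S)]
  simp_rw [step1]
  rw [← Finset.powerset_univ, ← Finset.prod_add]
  have : ∀ i : Fin n, ((if z i = x i then (1:ℝ) else 0) - ν i (z i)) + ν i (z i)
      = if z i = x i then (1:ℝ) else 0 := fun i => by ring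
  simp_rw [this]
  exact prod_ind x z

lemma sum_fes (hνsum : ∀ i, ∑ a, ν i a = 1) (f : (∀ i, Ω i) → ℝ) (x : ∀ i, Ω i) :
    ∑ S : Finset (Fin n), fes ν S f x = f x := by
  unfold fes
  rw [Finset.sum_comm]
  have : ∀ z, ∑ S : Finset (Fin n), kerS ν S x z * f z
      = (if z = x then (1:ℝ) else 0) * f z := by
    intro z
    rw [← Finset.sum_mul, sum_kerS hνsum x z]
  simp_rw [this, ite_mul, zero_mul, one_mul]
  rw [Finset.sum_ite_eq' univ x f, if_pos (mem_univ x)]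

lemma inr_eq_zero_of_good (hνsum : ∀ i, ∑ a, ν i a = 1) {S T : Finset (Fin n)} (hST : S ≠ T)
    {g h : (∀ i, Ω i) → ℝ}
    (hgS : ∀ i ∈ S, ∀ x, Eop ν i g x = 0)
    (hgI : ∀ i ∉ S, ∀ x (a : Ω i), g (Function.update x i a) = g x)
    (hhT : ∀ i ∈ T, ∀ x, Eop ν i h x = 0)
    (hhI : ∀ i ∉ T, ∀ x (a : Ω i), h (Function.update x i a) = h x) :
    inr ν g h = 0 := by
  have hex : ∃ i, (i ∈ S ∧ i ∉ T) ∨ (i ∈ T ∧ i ∉ S) := by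
    by_contra hc
    push_neg at hc
    exact hST (Finset.ext fun i => by specialize hc i; tauto)
  obtain ⟨i, hi | hi⟩ := hex
  · exact inr_eq_zero_of hνsum i (hgS i hi.1) (hhI i hi.2)
  · rw [inr_comm]
    exact inr_eq_zero_of hνsum i (hhT i hi.1) (hgI i hi.2)

lemma inr_sum_sum {γ : Type*} [DecidableEq γ] (𝒮 : Finset γ) (F G : γ → (∀ i, Ω i) → ℝ) :
    inr ν (fun x => ∑ S ∈ 𝒮, F S x) (fun x => ∑ T ∈ 𝒮, G T x)
      = ∑ S ∈ 𝒮, ∑ T ∈ 𝒮, inr ν (F S) (G T) := by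
  unfold inr
  have : ∀ x, wgt ν x * (∑ S ∈ 𝒮, F S x) * (∑ T ∈ 𝒮, G T x)
      = ∑ S ∈ 𝒮, ∑ T ∈ 𝒮, wgt ν x * F S x * G T x := by
    intro x
    rw [mul_assoc, Finset.sum_mul_sum, Finset.mul_sum]
    exact Finset.sum_congr rfl fun S _ => by
      rw [Finset.mul_sum]; exact Finset.sum_congr rfl fun T _ => by ring
  simp_rw [this]
  rw [Finset.sum_comm]
  exact Finset.sum_congr rfl fun S _ => Finset.sum_comm

lemma pythag {γ : Type*} [DecidableEq γ] (𝒮 : Finset γ) (F : γ → (∀ i, Ω i) → ℝ)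
    (horth : ∀ S ∈ 𝒮, ∀ T ∈ 𝒮, S ≠ T → inr ν (F S) (F T) = 0) :
    nrm2 ν (fun x => ∑ S ∈ 𝒮, F S x) = ∑ S ∈ 𝒮, nrm2 ν (F S) := by
  rw [nrm2, inr_sum_sum]
  refine Finset.sum_congr rfl fun S hS => ?_
  rw [Finset.sum_eq_single S (fun T hT hTS => horth S hS T hT (Ne.symm hTS))
    (fun h => absurd hS h)]
  rfl

lemma inr_sum_left {γ : Type*} (𝒮 : Finset γ) (F : γ → (∀ i, Ω i) → ℝ)
    (g : (∀ i, Ω i) → ℝ) :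
    inr ν (fun x => ∑ T ∈ 𝒮, F T x) g = ∑ T ∈ 𝒮, inr ν (F T) g := by
  unfold inr
  have : ∀ x, wgt ν x * (∑ T ∈ 𝒮, F T x) * g x = ∑ T ∈ 𝒮, wgt ν x * F T x * g x := by
    intro x
    rw [Finset.mul_sum, Finset.sum_mul]
  simp_rw [this]
  exact Finset.sum_comm

variable (ν μ)

lemma Pk_zero (f : (∀ i, Ω i) → ℝ) : Pk ν μ 0 f = f := by
  funext y
  unfold Pk
  simp only [Nat.not_lt_zero, if_false]
  simp_rw [prod_ind, ite_mul, zero_mul, one_mul]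
  rw [Finset.sum_ite_eq' univ y f, if_pos (mem_univ y)]

lemma Pk_top (f : (∀ i, Ω i) → ℝ) : Pk ν μ n f = Tfull ν μ f := by
  funext y
  unfold Pk Tfull
  refine Finset.sum_congr rfl fun x _ => ?_
  congr 1
  exact Finset.prod_congr rfl fun i _ => if_pos i.isLt

lemma Pk_succ (k : ℕ) (hk : k < n) (f : (∀ i, Ω i) → ℝ) :
    Pk ν μ (k+1) f = Top ν μ ⟨k, hk⟩ (Pk ν μ k f) := by
  funext y
  set i0 : Fin n := ⟨k, hk⟩ with hi0
  unfold Top Pk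
  simp_rw [Finset.mul_sum]
  rw [Finset.sum_comm]
  refine Finset.sum_congr rfl fun x _ => ?_
  have hupd : ∀ a : Ω i0,
      (∏ i, if i.1 < k then μ i (x i, Function.update y i0 a i) /
          ν i (Function.update y i0 a i) else (if x i = Function.update y i0 a i then (1:ℝ) else 0))
      = (if x i0 = a then (1:ℝ) else 0) *
        ∏ j ∈ univ.erase i0, (if j.1 < k then μ j (x j, y j) / ν j (y j)
          else if x j = y j then (1:ℝ) else 0) := by
    intro a
    rw [prod_update (fun j u => if j.1 < k then μ j (x j, u) / ν j u
      else (if x j = u then (1:ℝ) else 0)) y i0 a]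
    congr 1
    rw [if_neg (lt_irrefl k)]
  simp_rw [hupd]
  have hcollapse : ∑ a : Ω i0, μ i0 (a, y i0) / ν i0 (y i0) *
      ((if x i0 = a then (1:ℝ) else 0) *
        (∏ j ∈ univ.erase i0, (if j.1 < k then μ j (x j, y j) / ν j (y j)
          else if x j = y j then (1:ℝ) else 0)) * f x)
      = μ i0 (x i0, y i0) / ν i0 (y i0) *
        ((∏ j ∈ univ.erase i0, (if j.1 < k then μ j (x j, y j) / ν j (y j)
          else if x j = y j then (1:ℝ) else 0)) * f x) := by
    have : ∀ a : Ω i0, μ i0 (a, y i0) / ν i0 (y i0) *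
        ((if x i0 = a then (1:ℝ) else 0) *
          (∏ j ∈ univ.erase i0, (if j.1 < k then μ j (x j, y j) / ν j (y j)
            else if x j = y j then (1:ℝ) else 0)) * f x)
        = if x i0 = a then μ i0 (a, y i0) / ν i0 (y i0) *
            ((∏ j ∈ univ.erase i0, (if j.1 < k then μ j (x j, y j) / ν j (y j)
              else if x j = y j then (1:ℝ) else 0)) * f x) else 0 := by
      intro a
      by_cases h : x i0 = a
      · rw [if_pos h, if_pos h]; ring
      · rw [if_neg h, if_neg h]; ring
    simp_rw [this]
    rw [Finset.sum_ite_eq univ (x i0), if_pos (mem_univ (x i0))]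
  rw [hcollapse]
  rw [Finset.prod_eq_mul_prod_sdiff_singleton_of_mem (mem_univ i0)
    (fun i => if i.1 < k + 1 then μ i (x i, y i) / ν i (y i) else if x i = y i then (1:ℝ) else 0)]
  rw [Finset.erase_eq]
  have hval : (i0 : ℕ) = k := rfl
  rw [show (if (i0:ℕ) < k + 1 then μ i0 (x i0, y i0) / ν i0 (y i0)
      else if x i0 = y i0 then (1:ℝ) else 0) = μ i0 (x i0, y i0) / ν i0 (y i0) from
    if_pos (by omega)]
  rw [mul_assoc]
  congr 2
  refine Finset.prod_congr rfl fun j hj => ?_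
  have hjne : (j : ℕ) ≠ k := by
    intro hc
    exact (Finset.mem_sdiff.mp hj).2 (Finset.mem_singleton.mpr (Fin.ext hc))
  by_cases hlt : (j : ℕ) < k
  · rw [if_pos (by omega : (j:ℕ) < k + 1), if_pos hlt]
  · rw [if_neg (by omega : ¬ (j:ℕ) < k + 1), if_neg hlt]

lemma comp_eq_Pk (f : (∀ i, Ω i) → ℝ) : ∀ k, k ≤ n → comp ν μ k f = Pk ν μ k f := by
  intro k
  induction k with
  | zero => intro _; rw [Pk_zero]; rfl
  | succ k ih =>
    intro h
    have hk : k < n := h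
    show (if h' : k < n then Top ν μ ⟨k, h'⟩ (comp ν μ k f) else comp ν μ k f) = _
    rw [dif_pos hk, ih (le_of_lt hk), Pk_succ ν μ k hk]

lemma comp_eq_Tfull (f : (∀ i, Ω i) → ℝ) : comp ν μ n f = Tfull ν μ f := by
  rw [comp_eq_Pk ν μ f n le_rfl, Pk_top]

lemma comp_sum {γ : Type*} (𝒮 : Finset γ) (F : γ → (∀ i, Ω i) → ℝ) :
    ∀ k, comp ν μ k (fun x => ∑ S ∈ 𝒮, F S x) = fun y => ∑ S ∈ 𝒮, comp ν μ k (F S) y := by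
  intro k
  induction k with
  | zero => rfl
  | succ k ih =>
    show (if h' : k < n then Top ν μ ⟨k, h'⟩ (comp ν μ k _) else comp ν μ k _) = _
    split_ifs with h'
    · rw [ih]
      funext y
      rw [Top_apply_sum 𝒮 (fun S => comp ν μ k (F S)) ⟨k, h'⟩ y]
      show _ = ∑ S ∈ 𝒮, (if h'' : k < n then Top ν μ ⟨k, h''⟩ (comp ν μ k (F S))
        else comp ν μ k (F S)) y
      refine Finset.sum_congr rfl fun S _ => ?_
      rw [dif_pos h']
    · rw [ih]
      funext y
      show _ = ∑ S ∈ 𝒮, (if h'' : k < n then Top ν μ ⟨k, h''⟩ (comp ν μ k (F S))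
        else comp ν μ k (F S)) y
      refine Finset.sum_congr rfl fun S _ => ?_
      rw [dif_neg h']

variable {ν μ}

lemma Top_good (hν : ∀ i a, 0 < ν i a) (hνsum : ∀ i, ∑ a, ν i a = 1)
    (hmarg1 : ∀ i x, (∑ y, μ i (x, y)) = ν i x)
    (hmarg2 : ∀ i y, (∑ x, μ i (x, y)) = ν i y)
    {S : Finset (Fin n)} {g : (∀ i, Ω i) → ℝ} (j : Fin n)
    (h1 : ∀ i ∈ S, ∀ x, Eop ν i g x = 0)
    (h2 : ∀ i ∉ S, ∀ x (a : Ω i), g (Function.update x i a) = g x) :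
    (∀ i ∈ S, ∀ x, Eop ν i (Top ν μ j g) x = 0) ∧
    (∀ i ∉ S, ∀ x (a : Ω i), Top ν μ j g (Function.update x i a) = Top ν μ j g x) := by
  constructor
  · intro i hi x
    by_cases hij : j = i
    · subst hij
      rw [Eop_Top_self hν hmarg1 j g x, h1 j hi]
    · rw [Eop_Top_comm (Ne.symm hij) g x]
      unfold Top
      simp [h1 i hi]
  · intro i hi x a
    by_cases hij : j = i
    · subst hij
      rw [Top_of_indep hν hmarg2 (h2 j hi), Top_of_indep hν hmarg2 (h2 j hi), h2 j hi]
    · exact Top_indep_of_indep hij (h2 i hi) x a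

lemma comp_good (hν : ∀ i a, 0 < ν i a) (hνsum : ∀ i, ∑ a, ν i a = 1)
    (hmarg1 : ∀ i x, (∑ y, μ i (x, y)) = ν i x)
    (hmarg2 : ∀ i y, (∑ x, μ i (x, y)) = ν i y)
    {S : Finset (Fin n)} {g : (∀ i, Ω i) → ℝ}
    (h1 : ∀ i ∈ S, ∀ x, Eop ν i g x = 0)
    (h2 : ∀ i ∉ S, ∀ x (a : Ω i), g (Function.update x i a) = g x) :
    ∀ k, (∀ i ∈ S, ∀ x, Eop ν i (comp ν μ k g) x = 0) ∧
      (∀ i ∉ S, ∀ x (a : Ω i), comp ν μ k g (Function.update x i a) = comp ν μ k g x) := by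
  intro k
  induction k with
  | zero => exact ⟨h1, h2⟩
  | succ k ih =>
    have hrw : comp ν μ (k+1) g = if h' : k < n then Top ν μ ⟨k, h'⟩ (comp ν μ k g)
        else comp ν μ k g := rfl
    rw [hrw]
    split_ifs with h'
    · exact Top_good hν hνsum hmarg1 hmarg2 ⟨k, h'⟩ ih.1 ih.2
    · exact ih

lemma comp_nrm2_le {β : ℝ} (hν : ∀ i a, 0 < ν i a) (hνsum : ∀ i, ∑ a, ν i a = 1)
    (hmarg1 : ∀ i x, (∑ y, μ i (x, y)) = ν i x)
    (hmarg2 : ∀ i y, (∑ x, μ i (x, y)) = ν i y)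
    (hgap : ∀ (i : Fin n) (g : Ω i → ℝ), (∑ a, ν i a * g a) = 0 →
      Real.sqrt (∑ b, ν i b * ((∑ a, μ i (a, b) * g a) / ν i b) ^ 2) ≤
        (1 - β) * Real.sqrt (∑ a, ν i a * g a ^ 2))
    (hβ0 : 0 ≤ β) (hβ1 : β ≤ 1)
    {S : Finset (Fin n)} {g : (∀ i, Ω i) → ℝ}
    (h1 : ∀ i ∈ S, ∀ x, Eop ν i g x = 0)
    (h2 : ∀ i ∉ S, ∀ x (a : Ω i), g (Function.update x i a) = g x) :
    ∀ k, nrm2 ν (comp ν μ k g)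
      ≤ ((1 - β) ^ 2) ^ (S.filter (fun i : Fin n => (i:ℕ) < k)).card * nrm2 ν g := by
  intro k
  induction k with
  | zero =>
    have : S.filter (fun i : Fin n => (i:ℕ) < 0) = ∅ := by
      ext i; simp
    rw [this, Finset.card_empty, pow_zero, one_mul]
    exact le_refl _
  | succ k ih =>
    have hrw : comp ν μ (k+1) g = if h' : k < n then Top ν μ ⟨k, h'⟩ (comp ν μ k g)
        else comp ν μ k g := rfl
    rw [hrw]
    split_ifs with h'
    · have hgood := comp_good hν hνsum hmarg1 hmarg2 h1 h2 k
      by_cases hmem : (⟨k, h'⟩ : Fin n) ∈ S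
      · have hstep := nrm2_Top_le_of_mean_zero hν hνsum hgap ⟨k, h'⟩
          (hgood.1 ⟨k, h'⟩ hmem)
        have hfil : S.filter (fun i : Fin n => (i:ℕ) < k + 1)
            = insert (⟨k, h'⟩ : Fin n) (S.filter (fun i : Fin n => (i:ℕ) < k)) := by
          ext j
          simp only [Finset.mem_filter, Finset.mem_insert]
          constructor
          · rintro ⟨hjS, hjk⟩
            by_cases hc : (j:ℕ) = k
            · exact Or.inl (Fin.ext hc)
            · exact Or.inr ⟨hjS, by omega⟩
          · rintro (rfl | ⟨hjS, hjk⟩)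
            · exact ⟨hmem, Nat.lt_succ_self k⟩
            · exact ⟨hjS, by omega⟩
        have hnotmem : (⟨k, h'⟩ : Fin n) ∉ S.filter (fun i : Fin n => (i:ℕ) < k) := by
          simp [Finset.mem_filter]
        rw [hfil, Finset.card_insert_of_notMem hnotmem, pow_succ]
        calc nrm2 ν (Top ν μ ⟨k, h'⟩ (comp ν μ k g))
            ≤ (1 - β) ^ 2 * nrm2 ν (comp ν μ k g) := hstep
          _ ≤ (1 - β) ^ 2 * (((1 - β) ^ 2) ^ (S.filter (fun i : Fin n => (i:ℕ) < k)).card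
              * nrm2 ν g) := mul_le_mul_of_nonneg_left ih (sq_nonneg _)
          _ = ((1 - β) ^ 2) ^ (S.filter (fun i : Fin n => (i:ℕ) < k)).card * (1 - β) ^ 2
              * nrm2 ν g := by ring
      · have hstep := nrm2_Top_le hν hνsum hmarg1 hmarg2 hgap hβ0 hβ1 ⟨k, h'⟩
          (comp ν μ k g)
        have hfil : S.filter (fun i : Fin n => (i:ℕ) < k + 1) = S.filter (fun i : Fin n => (i:ℕ) < k) := by
          ext j
          simp only [Finset.mem_filter]
          constructor
          · rintro ⟨hjS, hjk⟩
            refine ⟨hjS, ?_⟩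
            by_cases hc : (j:ℕ) = k
            · exact absurd hjS (by rwa [show j = (⟨k, h'⟩ : Fin n) from Fin.ext hc] at hjS ⊢)
            · omega
          · rintro ⟨hjS, hjk⟩
            exact ⟨hjS, by omega⟩
        rw [hfil]
        exact le_trans hstep ih
    · have hfil : S.filter (fun i : Fin n => (i:ℕ) < k + 1) = S.filter (fun i : Fin n => (i:ℕ) < k) := by
        ext j
        have : (j:ℕ) < n := j.isLt
        simp only [Finset.mem_filter]
        constructor
        · rintro ⟨hjS, _⟩; exact ⟨hjS, by omega⟩
        · rintro ⟨hjS, _⟩; exact ⟨hjS, by omega⟩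
      rw [hfil]
      exact ih

lemma comp_nrm2_le_final {β : ℝ} (hν : ∀ i a, 0 < ν i a) (hνsum : ∀ i, ∑ a, ν i a = 1)
    (hmarg1 : ∀ i x, (∑ y, μ i (x, y)) = ν i x)
    (hmarg2 : ∀ i y, (∑ x, μ i (x, y)) = ν i y)
    (hgap : ∀ (i : Fin n) (g : Ω i → ℝ), (∑ a, ν i a * g a) = 0 →
      Real.sqrt (∑ b, ν i b * ((∑ a, μ i (a, b) * g a) / ν i b) ^ 2) ≤
        (1 - β) * Real.sqrt (∑ a, ν i a * g a ^ 2))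
    (hβ0 : 0 ≤ β) (hβ1 : β ≤ 1)
    {S : Finset (Fin n)} {g : (∀ i, Ω i) → ℝ}
    (h1 : ∀ i ∈ S, ∀ x, Eop ν i g x = 0)
    (h2 : ∀ i ∉ S, ∀ x (a : Ω i), g (Function.update x i a) = g x) :
    nrm2 ν (comp ν μ n g) ≤ ((1 - β) ^ 2) ^ S.card * nrm2 ν g := by
  have := comp_nrm2_le hν hνsum hmarg1 hmarg2 hgap hβ0 hβ1 h1 h2 n
  have hfil : S.filter (fun i : Fin n => (i:ℕ) < n) = S := by
    ext j
    simp only [Finset.mem_filter]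
    exact ⟨fun h => h.1, fun h => ⟨h, j.isLt⟩⟩
  rwa [hfil] at this

end Aux
end
end TMC

set_option maxHeartbeats 1000000 in
/-- Tensor products of Markov operators with singular-value gap `1 − β` contract
functions orthogonal to all `d`-juntas by a factor `(1−β)^d`. -/
theorem tensor_markov_contracts_high_degree (n : ℕ) (Ω : Fin n → Type*)
    [∀ i, Fintype (Ω i)]
    (ν : ∀ i, Ω i → ℝ) (hν : ∀ i a, 0 < ν i a) (hνsum : ∀ i, ∑ a, ν i a = 1)
    (μ : ∀ i, Ω i × Ω i → ℝ) (hμ0 : ∀ i z, 0 ≤ μ i z)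
    (hmarg1 : ∀ i x, (∑ y, μ i (x, y)) = ν i x)
    (hmarg2 : ∀ i y, (∑ x, μ i (x, y)) = ν i y)
    (β : ℝ) (hβ0 : 0 ≤ β) (hβ1 : β ≤ 1)
    (hgap : ∀ (i : Fin n) (g : Ω i → ℝ), (∑ a, ν i a * g a) = 0 →
      Real.sqrt (∑ b, ν i b * ((∑ a, μ i (a, b) * g a) / ν i b) ^ 2) ≤
        (1 - β) * Real.sqrt (∑ a, ν i a * g a ^ 2))
    (d : ℕ) (f : (∀ i, Ω i) → ℝ)
    (horth : ∀ h : (∀ i, Ω i) → ℝ,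
      (∃ A : Finset (Fin n), A.card ≤ d ∧ ∀ x y, (∀ i ∈ A, x i = y i) → h x = h y) →
      (∑ x, (∏ i, ν i (x i)) * f x * h x) = 0) :
    Real.sqrt (∑ y : ∀ i, Ω i, (∏ i, ν i (y i)) *
        (∑ x : ∀ i, Ω i, (∏ i, μ i (x i, y i) / ν i (y i)) * f x) ^ 2) ≤
      (1 - β) ^ d * Real.sqrt (∑ x, (∏ i, ν i (x i)) * f x ^ 2) := by
  classical
  open Finset in
  have hq0 : (0:ℝ) ≤ (1 - β) ^ 2 := sq_nonneg _
  have hq1 : (1 - β) ^ 2 ≤ 1 := by nlinarith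
  have hgood1 : ∀ S : Finset (Fin n), ∀ i ∈ S, ∀ x, TMC.Eop ν i (TMC.fes ν S f) x = 0 :=
    fun S i hi x => TMC.Eop_fes hνsum hi f x
  have hgood2 : ∀ S : Finset (Fin n), ∀ i ∉ S, ∀ x (a : Ω i),
      TMC.fes ν S f (Function.update x i a) = TMC.fes ν S f x :=
    fun S i hi x a => TMC.fes_indep hi f x a
  have hdecomp : f = fun x => ∑ S : Finset (Fin n), TMC.fes ν S f x :=
    funext fun x => (TMC.sum_fes hνsum f x).symm
  have hT : TMC.Tfull ν μ f
      = fun y => ∑ S : Finset (Fin n), TMC.comp ν μ n (TMC.fes ν S f) y := by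
    conv_lhs => rw [hdecomp]
    rw [← TMC.comp_eq_Tfull, TMC.comp_sum ν μ univ (fun S => TMC.fes ν S f) n]
  have hOrth : ∀ S ∈ (univ : Finset (Finset (Fin n))), ∀ T ∈ (univ : Finset (Finset (Fin n))),
      S ≠ T → TMC.inr ν (TMC.comp ν μ n (TMC.fes ν S f)) (TMC.comp ν μ n (TMC.fes ν T f)) = 0 := by
    intro S _ T _ hST
    have hS := TMC.comp_good hν hνsum hmarg1 hmarg2 (hgood1 S) (hgood2 S) n
    have hT' := TMC.comp_good hν hνsum hmarg1 hmarg2 (hgood1 T) (hgood2 T) n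
    exact TMC.inr_eq_zero_of_good hνsum hST hS.1 hS.2 hT'.1 hT'.2
  have hPyth1 : TMC.nrm2 ν (TMC.Tfull ν μ f)
      = ∑ S : Finset (Fin n), TMC.nrm2 ν (TMC.comp ν μ n (TMC.fes ν S f)) := by
    rw [hT]
    exact TMC.pythag univ _ hOrth
  have hterm : ∀ S : Finset (Fin n), TMC.nrm2 ν (TMC.comp ν μ n (TMC.fes ν S f))
      ≤ ((1 - β) ^ 2) ^ d * TMC.nrm2 ν (TMC.fes ν S f) := by
    intro S
    have hbound := TMC.comp_nrm2_le_final hν hνsum hmarg1 hmarg2 hgap hβ0 hβ1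
      (hgood1 S) (hgood2 S)
    by_cases hc : S.card ≤ d
    · have hjunta : ∃ A : Finset (Fin n), A.card ≤ d ∧ ∀ x y, (∀ i ∈ A, x i = y i) →
          TMC.fes ν S f x = TMC.fes ν S f y :=
        ⟨S, hc, fun x y hxy => TMC.fes_junta S f x y hxy⟩
      have h0' : TMC.inr ν f (TMC.fes ν S f) = 0 := horth _ hjunta
      have hexp : TMC.inr ν f (TMC.fes ν S f)
          = ∑ T : Finset (Fin n), TMC.inr ν (TMC.fes ν T f) (TMC.fes ν S f) := by
        have e1 : TMC.inr ν f (TMC.fes ν S f)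
            = TMC.inr ν (fun x => ∑ T : Finset (Fin n), TMC.fes ν T f x) (TMC.fes ν S f) := by
          unfold TMC.inr
          exact Finset.sum_congr rfl fun x _ => by simp only [TMC.sum_fes hνsum]
        rw [e1]
        exact TMC.inr_sum_left univ (fun T => TMC.fes ν T f) (TMC.fes ν S f)
      have hsingle : ∑ T : Finset (Fin n), TMC.inr ν (TMC.fes ν T f) (TMC.fes ν S f)
          = TMC.nrm2 ν (TMC.fes ν S f) := by
        rw [Finset.sum_eq_single S
          (fun T _ hTS => TMC.inr_eq_zero_of_good hνsum hTS (hgood1 T) (hgood2 T)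
            (hgood1 S) (hgood2 S))
          (fun h => absurd (Finset.mem_univ S) h)]
        rfl
      have hzero : TMC.nrm2 ν (TMC.fes ν S f) = 0 := by rw [← hsingle, ← hexp, h0']
      rw [hzero, mul_zero]
      exact le_trans hbound (by rw [hzero, mul_zero])
    · push_neg at hc
      refine le_trans hbound ?_
      exact mul_le_mul_of_nonneg_right (pow_le_pow_of_le_one hq0 hq1 (le_of_lt hc))
        (TMC.nrm2_nonneg hν _)
  have hPyth2 : ∑ S : Finset (Fin n), TMC.nrm2 ν (TMC.fes ν S f) = TMC.nrm2 ν f := by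
    conv_rhs => rw [hdecomp]
    exact (TMC.pythag univ (fun S => TMC.fes ν S f)
      (fun S _ T _ hST => TMC.inr_eq_zero_of_good hνsum hST (hgood1 S) (hgood2 S)
        (hgood1 T) (hgood2 T))).symm
  have hmain : TMC.nrm2 ν (TMC.Tfull ν μ f) ≤ ((1 - β) ^ d) ^ 2 * TMC.nrm2 ν f := by
    calc TMC.nrm2 ν (TMC.Tfull ν μ f)
        = ∑ S : Finset (Fin n), TMC.nrm2 ν (TMC.comp ν μ n (TMC.fes ν S f)) := hPyth1
      _ ≤ ∑ S : Finset (Fin n), ((1 - β) ^ 2) ^ d * TMC.nrm2 ν (TMC.fes ν S f) :=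
          Finset.sum_le_sum fun S _ => hterm S
      _ = ((1 - β) ^ 2) ^ d * ∑ S : Finset (Fin n), TMC.nrm2 ν (TMC.fes ν S f) :=
          (Finset.mul_sum _ _ _).symm
      _ = ((1 - β) ^ d) ^ 2 * TMC.nrm2 ν f := by
          rw [hPyth2, ← pow_mul, ← pow_mul, Nat.mul_comm]
  have hL : (∑ y : ∀ i, Ω i, (∏ i, ν i (y i)) *
      (∑ x : ∀ i, Ω i, (∏ i, μ i (x i, y i) / ν i (y i)) * f x) ^ 2)
      = TMC.nrm2 ν (TMC.Tfull ν μ f) := by rw [TMC.nrm2_eq]; rfl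
  have hR : (∑ x, (∏ i, ν i (x i)) * f x ^ 2) = TMC.nrm2 ν f := by rw [TMC.nrm2_eq]; rfl
  rw [hL, hR]
  have h1β : 0 ≤ (1 - β) ^ d := pow_nonneg (by linarith) d
  calc Real.sqrt (TMC.nrm2 ν (TMC.Tfull ν μ f))
      ≤ Real.sqrt (((1 - β) ^ d) ^ 2 * TMC.nrm2 ν f) := Real.sqrt_le_sqrt hmain
    _ = (1 - β) ^ d * Real.sqrt (TMC.nrm2 ν f) := by
        rw [Real.sqrt_mul (sq_nonneg _), Real.sqrt_sq h1β]
end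

section
/- Fix d ∈ ℕ and β > 0 with dβ ≤ 1/8. Let μ be a distribution on [m]×[m] with both marginals equal to ν, satisfying μ(a,a) ≥ (1−β)ν(a) for all a ∈ [m]. Then for every f : [m]^n → ℝ (with the product measure ν^⊗n) and every coordinate i ∈ [n], the degree-d influence satisfies I_i^{≤d}[f] ≤ 2 I_i[T_μ^{⊗n} f], where T_μ^{⊗n} is the n-fold tensor product of the Markov operator T_μ. -/
open Finset

section Aux
variable {n m : ℕ}

private lemma prod_upd (c : Fin n → Fin m → ℝ) (x : Fin n → Fin m) (j : Fin n) (a : Fin m) :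
    (∏ k, c k (Function.update x j a k)) = c j a * ∏ k ∈ Finset.univ.erase j, c k (x k) := by
  rw [← Finset.mul_prod_erase Finset.univ _ (Finset.mem_univ j), Function.update_self]
  congr 1
  refine Finset.prod_congr rfl fun k hk => ?_
  rw [Function.update_of_ne (Finset.mem_erase.1 hk).1]

private lemma prod_split (c : Fin n → Fin m → ℝ) (x : Fin n → Fin m) (j : Fin n) :
    (∏ k, c k (x k)) = c j (x j) * ∏ k ∈ Finset.univ.erase j, c k (x k) :=
  (Finset.mul_prod_erase Finset.univ _ (Finset.mem_univ j)).symm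

private lemma transfer (j : Fin n) (c : Fin n → Fin m → ℝ) (p : Fin m → ℝ)
    (G : (Fin n → Fin m) → Fin m → ℝ) :
    ∑ x : Fin n → Fin m, ∑ a : Fin m, p a * (∏ k, c k (x k)) * G x a
      = ∑ x : Fin n → Fin m, ∑ a : Fin m,
        p (x j) * (c j a * ∏ k ∈ Finset.univ.erase j, c k (x k)) * G (Function.update x j a) (x j) := by
  have hinv : Function.Involutive
      (fun q : (Fin n → Fin m) × Fin m => (Function.update q.1 j q.2, q.1 j)) := by
    intro q
    simp [Function.update_idem, Function.update_eq_self]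
  calc
    ∑ x : Fin n → Fin m, ∑ a : Fin m, p a * (∏ k, c k (x k)) * G x a
        = ∑ q : (Fin n → Fin m) × Fin m, p q.2 * (∏ k, c k (q.1 k)) * G q.1 q.2 :=
      (Fintype.sum_prod_type (f := fun q : (Fin n → Fin m) × Fin m =>
        p q.2 * (∏ k, c k (q.1 k)) * G q.1 q.2)).symm
    _ = ∑ q : (Fin n → Fin m) × Fin m,
          p (Function.update q.1 j q.2, q.1 j).2
            * (∏ k, c k ((Function.update q.1 j q.2, q.1 j).1 k))
            * G (Function.update q.1 j q.2, q.1 j).1 (Function.update q.1 j q.2, q.1 j).2 :=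
      (Equiv.sum_comp (Function.Involutive.toPerm _ hinv)
        (fun q : (Fin n → Fin m) × Fin m => p q.2 * (∏ k, c k (q.1 k)) * G q.1 q.2)).symm
    _ = ∑ q : (Fin n → Fin m) × Fin m,
          p (q.1 j) * (c j q.2 * ∏ k ∈ Finset.univ.erase j, c k (q.1 k))
            * G (Function.update q.1 j q.2) (q.1 j) := by
      refine Finset.sum_congr rfl fun q _ => ?_
      rw [prod_upd]
    _ = _ := Fintype.sum_prod_type (f := fun q : (Fin n → Fin m) × Fin m =>
        p (q.1 j) * (c j q.2 * ∏ k ∈ Finset.univ.erase j, c k (q.1 k))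
          * G (Function.update q.1 j q.2) (q.1 j))

end Aux

open Finset

section Aux
variable {n m : ℕ}

/-- weight -/
private def Wt (ν : Fin m → ℝ) (x : Fin n → Fin m) : ℝ := ∏ j, ν (x j)

/-- Markov operator -/
private noncomputable def Tmu (μ : Fin m × Fin m → ℝ) (ν : Fin m → ℝ) (g : (Fin n → Fin m) → ℝ)
    (y : Fin n → Fin m) : ℝ := ∑ x, (∏ j, μ (x j, y j) / ν (y j)) * g x

/-- average over coordinate j -/
private def Av (ν : Fin m → ℝ) (j : Fin n) (g : (Fin n → Fin m) → ℝ) (x : Fin n → Fin m) : ℝ :=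
  ∑ a, ν a * g (Function.update x j a)

private lemma Av_update (ν : Fin m → ℝ) (j : Fin n) (g : (Fin n → Fin m) → ℝ)
    (x : Fin n → Fin m) (b : Fin m) : Av ν j g (Function.update x j b) = Av ν j g x := by
  unfold Av
  refine Finset.sum_congr rfl fun a _ => ?_
  rw [Function.update_idem]

private lemma sum_nu_mul (ν : Fin m → ℝ) (hνsum : ∑ a, ν a = 1) (Y : ℝ) :
    ∑ a : Fin m, ν a * Y = Y := by
  rw [← Finset.sum_mul, hνsum, one_mul]

end Aux

section Aux2
variable {n m : ℕ}
private lemma sum_nu_mul₂ (ν : Fin m → ℝ) (hνsum : ∑ a, ν a = 1) (A B : ℝ) :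
    ∑ a : Fin m, ν a * A * B = A * B := by
  rw [← Finset.sum_mul, ← Finset.sum_mul, hνsum, one_mul]
end Aux2
section MeanF
variable {n m : ℕ}

private lemma meanF (ν : Fin m → ℝ) (hν : ∀ a, 0 < ν a) (hνsum : ∑ a, ν a = 1)
    (S : Finset (Fin n)) (j : Fin n) (hj : j ∈ S) (FS : (Fin n → Fin m) → ℝ)
    (hjun : ∀ x y, (∀ k ∈ S, x k = y k) → FS x = FS y)
    (horthS : ∀ g : (Fin n → Fin m) → ℝ, (∀ x y, (∀ k ∈ S.erase j, x k = y k) → g x = g y) →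
      (∑ x, (∏ k, ν (x k)) * FS x * g x) = 0)
    (x : Fin n → Fin m) : Av ν j FS x = 0 := by
  have hAvJ : ∀ u v : Fin n → Fin m, (∀ k ∈ S.erase j, u k = v k) → Av ν j FS u = Av ν j FS v := by
    intro u v huv
    refine Finset.sum_congr rfl fun a _ => ?_
    congr 1
    apply hjun
    intro k hk
    by_cases hkj : k = j
    · subst hkj; simp
    · rw [Function.update_of_ne hkj, Function.update_of_ne hkj]
      exact huv k (Finset.mem_erase.2 ⟨hkj, hk⟩)
  have h0 : ∑ z, (∏ k, ν (z k)) * FS z * Av ν j FS z = 0 := horthS _ hAvJ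
  have key : ∑ z, (∏ k, ν (z k)) * Av ν j FS z * Av ν j FS z
      = ∑ z, (∏ k, ν (z k)) * FS z * Av ν j FS z := by
    have step1 : ∑ z, (∏ k, ν (z k)) * Av ν j FS z * Av ν j FS z
        = ∑ z : Fin n → Fin m, ∑ a : Fin m, ν a * (∏ k, (fun _ : Fin n => ν) k (z k))
            * (Av ν j FS z * FS (Function.update z j a)) := by
      refine Finset.sum_congr rfl fun z _ => ?_
      have h2 : ∑ a : Fin m, ν a * (∏ k, ν (z k)) * (Av ν j FS z * FS (Function.update z j a))
          = (∏ k, ν (z k)) * Av ν j FS z * ∑ a, ν a * FS (Function.update z j a) := by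
        rw [Finset.mul_sum]
        exact Finset.sum_congr rfl fun a _ => by ring
      rw [h2]; rfl
    rw [step1,
      transfer j (fun _ => ν) ν (fun z a => Av ν j FS z * FS (Function.update z j a))]
    have step2 : ∀ z : Fin n → Fin m, ∀ a : Fin m,
        ν (z j) * ((fun _ : Fin n => ν) j a * ∏ k ∈ Finset.univ.erase j, ν (z k))
          * (Av ν j FS (Function.update z j a)
              * FS (Function.update (Function.update z j a) j (z j)))
        = ν a * ((∏ k, ν (z k)) * FS z * Av ν j FS z) := by
      intro z a
      rw [Av_update, Function.update_idem, Function.update_eq_self,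
        prod_split (fun _ => ν) z j]
      ring
    calc ∑ z : Fin n → Fin m, ∑ a : Fin m,
          ν (z j) * ((fun _ : Fin n => ν) j a * ∏ k ∈ Finset.univ.erase j, ν (z k))
            * (Av ν j FS (Function.update z j a)
                * FS (Function.update (Function.update z j a) j (z j)))
        = ∑ z : Fin n → Fin m, ∑ a : Fin m, ν a * ((∏ k, ν (z k)) * FS z * Av ν j FS z) := by
          exact Finset.sum_congr rfl fun z _ => Finset.sum_congr rfl fun a _ => step2 z a
      _ = ∑ z, (∏ k, ν (z k)) * FS z * Av ν j FS z := by
          refine Finset.sum_congr rfl fun z _ => ?_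
          rw [sum_nu_mul ν hνsum]
  have hz : ∑ z, (∏ k, ν (z k)) * Av ν j FS z * Av ν j FS z = 0 := key.trans h0
  have hnonneg : ∀ z ∈ Finset.univ, (0:ℝ) ≤ (∏ k, ν (z k)) * Av ν j FS z * Av ν j FS z := by
    intro z _
    rw [mul_assoc]
    exact mul_nonneg (Finset.prod_nonneg fun k _ => (hν _).le) (mul_self_nonneg _)
  have := (Finset.sum_eq_zero_iff_of_nonneg hnonneg).1 hz x (Finset.mem_univ x)
  have hWpos : 0 < ∏ k, ν (x k) := Finset.prod_pos fun k _ => hν _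
  have := mul_self_eq_zero.1 (by
    have h3 : (∏ k, ν (x k)) * (Av ν j FS x * Av ν j FS x) = 0 := by rw [← mul_assoc]; exact this
    rcases mul_eq_zero.1 h3 with h | h
    · exact absurd h hWpos.ne'
    · exact h)
  exact this

end MeanF
section Tops
variable {n m : ℕ}

private lemma Kr_upd (μ : Fin m × Fin m → ℝ) (ν : Fin m → ℝ) (x y : Fin n → Fin m)
    (j : Fin n) (a : Fin m) :
    (∏ k, μ (x k, Function.update y j a k) / ν (Function.update y j a k))
      = (μ (x j, a) / ν a) * ∏ k ∈ Finset.univ.erase j, μ (x k, y k) / ν (y k) := by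
  have := prod_upd (fun k b => μ (x k, b) / ν b) y j a
  simpa using this

/-- value of `Tmu FS` at an update, for `j ∉ S`. -/
private lemma T_upd_val (μ : Fin m × Fin m → ℝ) (ν : Fin m → ℝ) (hν : ∀ a, 0 < ν a)
    (hνsum : ∑ a, ν a = 1) (hmarg2 : ∀ b, (∑ a, μ (a, b)) = ν b)
    (S : Finset (Fin n)) (j : Fin n) (hjS : j ∉ S) (FS : (Fin n → Fin m) → ℝ)
    (hjun : ∀ x y, (∀ k ∈ S, x k = y k) → FS x = FS y) (y : Fin n → Fin m) (b : Fin m) :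
    Tmu μ ν FS (Function.update y j b)
      = ∑ x, ν (x j) * (∏ k ∈ Finset.univ.erase j, μ (x k, y k) / ν (y k)) * FS x := by
  set c : Fin n → Fin m → ℝ :=
    fun k b' => μ (b', Function.update y j b k) / ν (Function.update y j b k) with hc
  have hcj : ∀ b', c j b' = μ (b', b) / ν b := by
    intro b'; rw [hc]; simp
  have hck : ∀ k, k ≠ j → ∀ b', c k b' = μ (b', y k) / ν (y k) := by
    intro k hk b'; rw [hc]; simp [Function.update_of_ne hk]
  have hF : ∀ (x : Fin n → Fin m) (a : Fin m), FS (Function.update x j a) = FS x := by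
    intro x a
    apply hjun
    intro k hk
    rw [Function.update_of_ne]
    rintro rfl; exact hjS hk
  have step1 : Tmu μ ν FS (Function.update y j b)
      = ∑ x : Fin n → Fin m, ∑ a : Fin m, ν a * (∏ k, c k (x k)) * FS x := by
    unfold Tmu
    refine Finset.sum_congr rfl fun x _ => ?_
    rw [sum_nu_mul₂ ν hνsum]
  rw [step1, transfer j c ν (fun x a => FS x)]
  refine Finset.sum_congr rfl fun x _ => ?_
  have herase : (∏ k ∈ Finset.univ.erase j, c k (x k))
      = ∏ k ∈ Finset.univ.erase j, μ (x k, y k) / ν (y k) :=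
    Finset.prod_congr rfl fun k hk => hck k (Finset.mem_erase.1 hk).1 _
  calc ∑ a : Fin m, ν (x j) * (c j a * ∏ k ∈ Finset.univ.erase j, c k (x k))
        * FS (Function.update x j a)
      = ∑ a : Fin m, (μ (a, b) / ν b)
          * (ν (x j) * (∏ k ∈ Finset.univ.erase j, μ (x k, y k) / ν (y k)) * FS x) := by
        refine Finset.sum_congr rfl fun a _ => ?_
        rw [hF, hcj, herase]; ring
    _ = ν (x j) * (∏ k ∈ Finset.univ.erase j, μ (x k, y k) / ν (y k)) * FS x := by
        rw [← Finset.sum_mul]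
        rw [← Finset.sum_div, hmarg2, div_self (hν b).ne', one_mul]

private lemma T_upd (μ : Fin m × Fin m → ℝ) (ν : Fin m → ℝ) (hν : ∀ a, 0 < ν a)
    (hνsum : ∑ a, ν a = 1) (hmarg2 : ∀ b, (∑ a, μ (a, b)) = ν b)
    (S : Finset (Fin n)) (j : Fin n) (hjS : j ∉ S) (FS : (Fin n → Fin m) → ℝ)
    (hjun : ∀ x y, (∀ k ∈ S, x k = y k) → FS x = FS y) (y : Fin n → Fin m) (b : Fin m) :
    Tmu μ ν FS (Function.update y j b) = Tmu μ ν FS y := by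
  rw [T_upd_val μ ν hν hνsum hmarg2 S j hjS FS hjun y b]
  conv_rhs => rw [← Function.update_eq_self j y]
  rw [T_upd_val μ ν hν hνsum hmarg2 S j hjS FS hjun y (y j)]

private lemma T_mean (μ : Fin m × Fin m → ℝ) (ν : Fin m → ℝ) (hν : ∀ a, 0 < ν a)
    (hνsum : ∑ a, ν a = 1) (hmarg1 : ∀ a, (∑ b, μ (a, b)) = ν a)
    (S : Finset (Fin n)) (j : Fin n) (FS : (Fin n → Fin m) → ℝ)
    (hmean : ∀ x, Av ν j FS x = 0) (y : Fin n → Fin m) :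
    Av ν j (Tmu μ ν FS) y = 0 := by
  set c : Fin n → Fin m → ℝ :=
    fun k b => if k = j then ν b else μ (b, y k) / ν (y k) with hc
  have hcj : ∀ b, c j b = ν b := by intro b; simp [hc]
  have hck : ∀ k, k ≠ j → ∀ b, c k b = μ (b, y k) / ν (y k) := by
    intro k hk b; simp [hc, hk]
  -- first: Av = ∑ x, ν (x j) * P x * FS x
  have step1 : Av ν j (Tmu μ ν FS) y
      = ∑ x, ν (x j) * (∏ k ∈ Finset.univ.erase j, μ (x k, y k) / ν (y k)) * FS x := by
    unfold Av Tmu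
    calc ∑ a, ν a * ∑ x, (∏ k, μ (x k, Function.update y j a k)
            / ν (Function.update y j a k)) * FS x
        = ∑ a : Fin m, ∑ x : Fin n → Fin m,
            μ (x j, a) * ((∏ k ∈ Finset.univ.erase j, μ (x k, y k) / ν (y k)) * FS x) := by
          refine Finset.sum_congr rfl fun a _ => ?_
          rw [Finset.mul_sum]
          refine Finset.sum_congr rfl fun x _ => ?_
          rw [Kr_upd]
          have h1 : ν a ≠ 0 := (hν a).ne'
          field_simp
      _ = ∑ x : Fin n → Fin m, ∑ a : Fin m,
            μ (x j, a) * ((∏ k ∈ Finset.univ.erase j, μ (x k, y k) / ν (y k)) * FS x) :=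
          Finset.sum_comm
      _ = ∑ x, ν (x j) * (∏ k ∈ Finset.univ.erase j, μ (x k, y k) / ν (y k)) * FS x := by
          refine Finset.sum_congr rfl fun x _ => ?_
          rw [← Finset.sum_mul, hmarg1, mul_assoc]
  rw [step1]
  -- second: that is 0 by transfer
  have herase : ∀ x : Fin n → Fin m, (∏ k ∈ Finset.univ.erase j, c k (x k))
      = ∏ k ∈ Finset.univ.erase j, μ (x k, y k) / ν (y k) := fun x =>
    Finset.prod_congr rfl fun k hk => hck k (Finset.mem_erase.1 hk).1 _
  have step2 : ∑ x, ν (x j) * (∏ k ∈ Finset.univ.erase j, μ (x k, y k) / ν (y k)) * FS x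
      = ∑ x : Fin n → Fin m, ∑ a : Fin m, ν a * (∏ k, c k (x k)) * FS x := by
    refine Finset.sum_congr rfl fun x _ => ?_
    rw [sum_nu_mul₂ ν hνsum, prod_split c x j, hcj, herase]
  rw [step2, transfer j c ν (fun x a => FS x)]
  refine Finset.sum_eq_zero fun x _ => ?_
  calc ∑ a : Fin m, ν (x j) * (c j a * ∏ k ∈ Finset.univ.erase j, c k (x k))
        * FS (Function.update x j a)
      = ν (x j) * (∏ k ∈ Finset.univ.erase j, μ (x k, y k) / ν (y k))
          * ∑ a, ν a * FS (Function.update x j a) := by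
        rw [Finset.mul_sum]
        refine Finset.sum_congr rfl fun a _ => ?_
        rw [hcj, herase]; ring
    _ = 0 := by rw [show (∑ a, ν a * FS (Function.update x j a)) = Av ν j FS x from rfl,
          hmean x, mul_zero]

end Tops
section Orth
variable {n m : ℕ}

private lemma ip_zero (ν : Fin m → ℝ) (hνsum : ∑ a, ν a = 1) (j : Fin n)
    (g h : (Fin n → Fin m) → ℝ)
    (hg : ∀ y a, g (Function.update y j a) = g y)
    (hh : ∀ y, Av ν j h y = 0) :
    ∑ y, (∏ k, ν (y k)) * (g y * h y) = 0 := by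
  have step1 : ∑ y, (∏ k, ν (y k)) * (g y * h y)
      = ∑ y : Fin n → Fin m, ∑ a : Fin m, ν a * (∏ k, (fun _ : Fin n => ν) k (y k))
          * (g y * h y) := by
    refine Finset.sum_congr rfl fun y _ => ?_
    rw [show (∑ a : Fin m, ν a * (∏ k, ν (y k)) * (g y * h y))
        = (∏ k, ν (y k)) * (g y * h y) from sum_nu_mul₂ ν hνsum _ _]
  rw [step1, transfer j (fun _ => ν) ν (fun y a => g y * h y)]
  refine Finset.sum_eq_zero fun y _ => ?_
  calc ∑ a : Fin m, ν (y j) * ((fun _ : Fin n => ν) j a * ∏ k ∈ Finset.univ.erase j, ν (y k))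
        * (g (Function.update y j a) * h (Function.update y j a))
      = (∏ k, ν (y k)) * g y * ∑ a, ν a * h (Function.update y j a) := by
        rw [Finset.mul_sum]
        refine Finset.sum_congr rfl fun a _ => ?_
        rw [hg, prod_split (fun _ => ν) y j]
        ring
    _ = 0 := by rw [show (∑ a, ν a * h (Function.update y j a)) = Av ν j h y from rfl,
          hh y, mul_zero]

private lemma cancel2 (ν : Fin m → ℝ) (hνsum : ∑ a, ν a = 1) (j : Fin n)
    (c : Fin n → Fin m → Fin m → ℝ) (hc : (∑ a, ∑ b, c j a b) = 0)
    (g : (Fin n → Fin m) → ℝ) (hg : ∀ x a, g (Function.update x j a) = g x) :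
    ∑ y : Fin n → Fin m, ∑ x : Fin n → Fin m, (∏ k, c k (x k) (y k)) * (g x * g y) = 0 := by
  -- step A: integrate out the x-side at coordinate j
  have stepA : ∀ y : Fin n → Fin m,
      ∑ x : Fin n → Fin m, (∏ k, c k (x k) (y k)) * (g x * g y)
      = ∑ x : Fin n → Fin m, (∑ a, c j a (y j))
          * (ν (x j) * (∏ k ∈ Finset.univ.erase j, c k (x k) (y k)) * (g x * g y)) := by
    intro y
    have h1 : ∑ x : Fin n → Fin m, (∏ k, c k (x k) (y k)) * (g x * g y)
        = ∑ x : Fin n → Fin m, ∑ a : Fin m,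
            ν a * (∏ k, (fun k b => c k b (y k)) k (x k)) * ((fun x (_ : Fin m) => g x * g y) x a) := by
      refine Finset.sum_congr rfl fun x _ => ?_
      exact (sum_nu_mul₂ ν hνsum _ _).symm
    rw [h1, transfer j (fun k b => c k b (y k)) ν (fun x _ => g x * g y)]
    refine Finset.sum_congr rfl fun x _ => ?_
    rw [Finset.sum_mul]
    refine Finset.sum_congr rfl fun a _ => ?_
    rw [hg]
    ring
  calc ∑ y : Fin n → Fin m, ∑ x : Fin n → Fin m, (∏ k, c k (x k) (y k)) * (g x * g y)
      = ∑ x : Fin n → Fin m, ∑ y : Fin n → Fin m, (∑ a, c j a (y j))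
          * (ν (x j) * (∏ k ∈ Finset.univ.erase j, c k (x k) (y k)) * (g x * g y)) := by
        rw [show (∑ y : Fin n → Fin m, ∑ x : Fin n → Fin m, (∏ k, c k (x k) (y k)) * (g x * g y))
          = ∑ y : Fin n → Fin m, ∑ x : Fin n → Fin m, (∑ a, c j a (y j))
            * (ν (x j) * (∏ k ∈ Finset.univ.erase j, c k (x k) (y k)) * (g x * g y)) from
          Finset.sum_congr rfl fun y _ => stepA y]
        exact Finset.sum_comm
    _ = 0 := by
        refine Finset.sum_eq_zero fun x _ => ?_
        -- inner sum over y : integrate out y-side at coordinate j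
        set c' : Fin n → Fin m → ℝ :=
          fun k b => if k = j then (∑ a, c j a b) else c k (x k) b with hc'
        have hprod : ∀ y : Fin n → Fin m, (∏ k, c' k (y k))
            = (∑ a, c j a (y j)) * ∏ k ∈ Finset.univ.erase j, c k (x k) (y k) := by
          intro y
          rw [prod_split c' y j]
          congr 1
          · simp [hc']
          · exact Finset.prod_congr rfl fun k hk => by
              simp [hc', (Finset.mem_erase.1 hk).1]
        have h2 : ∑ y : Fin n → Fin m, (∑ a, c j a (y j))
            * (ν (x j) * (∏ k ∈ Finset.univ.erase j, c k (x k) (y k)) * (g x * g y))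
            = ∑ y : Fin n → Fin m, ∑ a : Fin m,
              ν a * (∏ k, c' k (y k)) * ((fun y (_ : Fin m) => ν (x j) * (g x * g y)) y a) := by
          refine Finset.sum_congr rfl fun y _ => ?_
          rw [show (∑ a : Fin m, ν a * (∏ k, c' k (y k)) * (ν (x j) * (g x * g y)))
            = (∏ k, c' k (y k)) * (ν (x j) * (g x * g y)) from sum_nu_mul₂ ν hνsum _ _, hprod]
          ring
        rw [h2, transfer j c' ν (fun y _ => ν (x j) * (g x * g y))]
        refine Finset.sum_eq_zero fun y _ => ?_
        have hc'j : ∀ b, c' j b = ∑ a, c j a b := fun b => by simp [hc']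
        calc ∑ a : Fin m, ν (y j) * (c' j a * ∏ k ∈ Finset.univ.erase j, c' k (y k))
              * (ν (x j) * (g x * g (Function.update y j a)))
            = ∑ a : Fin m, c' j a * (ν (y j) * (∏ k ∈ Finset.univ.erase j, c' k (y k))
                * (ν (x j) * (g x * g y))) := by
              refine Finset.sum_congr rfl fun a _ => ?_
              rw [hg]
              ring
          _ = 0 := by
              rw [← Finset.sum_mul, show (∑ a, c' j a) = 0 from ?_, zero_mul]
              rw [show (∑ a, c' j a) = ∑ a, ∑ b, c j b a from
                Finset.sum_congr rfl fun a _ => hc'j a]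
              rw [Finset.sum_comm]
              exact hc

end Orth
section QA
variable {n m : ℕ}

private def dk (ν : Fin m → ℝ) (a b : Fin m) : ℝ := if a = b then ν a else 0

private def cK (μ : Fin m × Fin m → ℝ) (ν : Fin m → ℝ) (A : Finset (Fin n)) (j : Fin n)
    (a b : Fin m) : ℝ := if j ∈ A then μ (a, b) else dk ν a b

private noncomputable def QA (μ : Fin m × Fin m → ℝ) (ν : Fin m → ℝ)
    (g : (Fin n → Fin m) → ℝ) (A : Finset (Fin n)) : ℝ :=
  ∑ y : Fin n → Fin m, ∑ x : Fin n → Fin m, (∏ k, cK μ ν A k (x k) (y k)) * (g x * g y)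

private lemma dk_nonneg (ν : Fin m → ℝ) (hν : ∀ a, 0 < ν a) (a b : Fin m) : 0 ≤ dk ν a b := by
  unfold dk; split <;> [exact (hν a).le; rfl]

private lemma dk_row (ν : Fin m → ℝ) (a : Fin m) : ∑ b, dk ν a b = ν a := by
  unfold dk; simp

private lemma dk_col (ν : Fin m → ℝ) (b : Fin m) : ∑ a, dk ν a b = ν b := by
  unfold dk
  rw [Finset.sum_ite_eq' Finset.univ b (fun a => ν a)]  -- maybe wrong; fix below
  · simp

private lemma cK_nonneg (μ : Fin m × Fin m → ℝ) (ν : Fin m → ℝ) (hν : ∀ a, 0 < ν a)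
    (hμ0 : ∀ z, 0 ≤ μ z) (A : Finset (Fin n)) (j : Fin n) (a b : Fin m) :
    0 ≤ cK μ ν A j a b := by
  unfold cK; split
  · exact hμ0 _
  · exact dk_nonneg ν hν a b

private lemma cK_row (μ : Fin m × Fin m → ℝ) (ν : Fin m → ℝ)
    (hmarg1 : ∀ a, (∑ b, μ (a, b)) = ν a) (A : Finset (Fin n)) (j : Fin n) (a : Fin m) :
    ∑ b, cK μ ν A j a b = ν a := by
  unfold cK; split
  · exact hmarg1 a
  · exact dk_row ν a

private lemma cK_col (μ : Fin m × Fin m → ℝ) (ν : Fin m → ℝ)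
    (hmarg2 : ∀ b, (∑ a, μ (a, b)) = ν b) (A : Finset (Fin n)) (j : Fin n) (b : Fin m) :
    ∑ a, cK μ ν A j a b = ν b := by
  unfold cK; split
  · exact hmarg2 b
  · exact dk_col ν b

private lemma qa_univ (μ : Fin m × Fin m → ℝ) (ν : Fin m → ℝ) (g : (Fin n → Fin m) → ℝ) :
    QA μ ν g Finset.univ
      = ∑ y : Fin n → Fin m, ∑ x : Fin n → Fin m, (∏ k, μ (x k, y k)) * (g x * g y) := by
  unfold QA cK
  simp

private lemma qa_empty (μ : Fin m × Fin m → ℝ) (ν : Fin m → ℝ) (g : (Fin n → Fin m) → ℝ) :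
    QA μ ν g ∅ = ∑ x, (∏ k, ν (x k)) * g x ^ 2 := by
  unfold QA cK
  simp only [Finset.notMem_empty, if_false]
  refine Finset.sum_congr rfl fun y _ => ?_
  rw [Finset.sum_eq_single y]
  · have : (∏ k, dk ν (y k) (y k)) = ∏ k, ν (y k) := by
      refine Finset.prod_congr rfl fun k _ => ?_
      unfold dk; simp
    rw [this]; ring
  · intro x _ hxy
    have : ∃ k, x k ≠ y k := by
      by_contra hcon
      push_neg at hcon
      exact hxy (funext hcon)
    obtain ⟨k, hk⟩ := this
    rw [Finset.prod_eq_zero (Finset.mem_univ k)]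
    · ring
    · unfold dk; simp [hk]
  · intro hy; exact absurd (Finset.mem_univ y) hy

private lemma qa_insert (μ : Fin m × Fin m → ℝ) (ν : Fin m → ℝ) (g : (Fin n → Fin m) → ℝ)
    (A : Finset (Fin n)) (k : Fin n) (hk : k ∉ A) :
    QA μ ν g (insert k A) - QA μ ν g A
      = ∑ y : Fin n → Fin m, ∑ x : Fin n → Fin m,
          ((μ (x k, y k) - dk ν (x k) (y k))
            * ∏ j ∈ Finset.univ.erase k, cK μ ν A j (x j) (y j)) * (g x * g y) := by
  unfold QA
  rw [← Finset.sum_sub_distrib]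
  refine Finset.sum_congr rfl fun y _ => ?_
  rw [← Finset.sum_sub_distrib]
  refine Finset.sum_congr rfl fun x _ => ?_
  have herase : ∀ B : Finset (Fin n), k ∉ B → (∏ j ∈ Finset.univ.erase k, cK μ ν (insert k B) j (x j) (y j))
      = ∏ j ∈ Finset.univ.erase k, cK μ ν B j (x j) (y j) := by
    intro B hB
    refine Finset.prod_congr rfl fun j hj => ?_
    have hjk : j ≠ k := (Finset.mem_erase.1 hj).1
    simp [cK, Finset.mem_insert, hjk]
  rw [prod_split (fun j b => cK μ ν (insert k A) j b (y j)) x k,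
    prod_split (fun j b => cK μ ν A j b (y j)) x k]
  have h1 : cK μ ν (insert k A) k (x k) (y k) = μ (x k, y k) := by
    unfold cK; simp
  have h2 : cK μ ν A k (x k) (y k) = dk ν (x k) (y k) := by
    unfold cK; simp [hk]
  rw [h1, h2, herase A hk]
  ring

end QA
section Bound
variable {n m : ℕ}

private lemma mu_diag_le (μ : Fin m × Fin m → ℝ) (ν : Fin m → ℝ) (hμ0 : ∀ z, 0 ≤ μ z)
    (hmarg1 : ∀ a, (∑ b, μ (a, b)) = ν a) (a : Fin m) : μ (a, a) ≤ ν a := by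
  rw [← hmarg1 a]
  exact Finset.single_le_sum (fun b _ => hμ0 _) (Finset.mem_univ a)

private lemma e_abs (μ : Fin m × Fin m → ℝ) (ν : Fin m → ℝ) (hμ0 : ∀ z, 0 ≤ μ z)
    (hmarg1 : ∀ a, (∑ b, μ (a, b)) = ν a) (a b : Fin m) :
    |μ (a, b) - dk ν a b| = if a = b then ν a - μ (a, a) else μ (a, b) := by
  unfold dk
  by_cases hab : a = b
  · subst hab
    rw [if_pos rfl, if_pos rfl, abs_of_nonpos (by linarith [mu_diag_le μ ν hμ0 hmarg1 a])]
    ring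
  · simp only [if_neg hab, sub_zero]
    exact abs_of_nonneg (hμ0 _)

private lemma e_row (μ : Fin m × Fin m → ℝ) (ν : Fin m → ℝ) (β : ℝ) (hμ0 : ∀ z, 0 ≤ μ z)
    (hmarg1 : ∀ a, (∑ b, μ (a, b)) = ν a) (hdiag : ∀ a, (1 - β) * ν a ≤ μ (a, a)) (a : Fin m) :
    ∑ b, |μ (a, b) - dk ν a b| ≤ 2 * β * ν a := by
  have hsum : ∑ b ∈ Finset.univ.erase a, μ (a, b) = ν a - μ (a, a) := by
    have := Finset.add_sum_erase Finset.univ (fun b => μ (a, b)) (Finset.mem_univ a)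
    rw [hmarg1 a] at this
    linarith
  calc ∑ b, |μ (a, b) - dk ν a b|
      = (ν a - μ (a, a)) + ∑ b ∈ Finset.univ.erase a, μ (a, b) := by
        rw [← Finset.add_sum_erase Finset.univ _ (Finset.mem_univ a)]
        congr 1
        · rw [e_abs μ ν hμ0 hmarg1, if_pos rfl]
        · refine Finset.sum_congr rfl fun b hb => ?_
          rw [e_abs μ ν hμ0 hmarg1, if_neg (Ne.symm (Finset.mem_erase.1 hb).1)]
    _ = 2 * (ν a - μ (a, a)) := by rw [hsum]; ring
    _ ≤ 2 * β * ν a := by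
        have := hdiag a
        nlinarith

private lemma e_col (μ : Fin m × Fin m → ℝ) (ν : Fin m → ℝ) (β : ℝ) (hμ0 : ∀ z, 0 ≤ μ z)
    (hmarg1 : ∀ a, (∑ b, μ (a, b)) = ν a) (hmarg2 : ∀ b, (∑ a, μ (a, b)) = ν b)
    (hdiag : ∀ a, (1 - β) * ν a ≤ μ (a, a)) (b : Fin m) :
    ∑ a, |μ (a, b) - dk ν a b| ≤ 2 * β * ν b := by
  have hsum : ∑ a ∈ Finset.univ.erase b, μ (a, b) = ν b - μ (b, b) := by
    have := Finset.add_sum_erase Finset.univ (fun a => μ (a, b)) (Finset.mem_univ b)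
    rw [hmarg2 b] at this
    linarith
  calc ∑ a, |μ (a, b) - dk ν a b|
      = (ν b - μ (b, b)) + ∑ a ∈ Finset.univ.erase b, μ (a, b) := by
        rw [← Finset.add_sum_erase Finset.univ _ (Finset.mem_univ b)]
        congr 1
        · rw [e_abs μ ν hμ0 hmarg1, if_pos rfl]
        · refine Finset.sum_congr rfl fun a ha => ?_
          rw [e_abs μ ν hμ0 hmarg1, if_neg (Finset.mem_erase.1 ha).1]
    _ = 2 * (ν b - μ (b, b)) := by rw [hsum]; ring
    _ ≤ 2 * β * ν b := by
        have := hdiag b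
        nlinarith

private lemma abs_mul_le_half (u v : ℝ) : |u * v| ≤ (u ^ 2 + v ^ 2) / 2 := by
  rw [abs_mul]
  nlinarith [sq_nonneg (|u| - |v|), sq_abs u, sq_abs v, abs_nonneg u, abs_nonneg v]

end Bound
private lemma qa_step_bound {n m : ℕ} (μ : Fin m × Fin m → ℝ) (ν : Fin m → ℝ) (β : ℝ) (hβ : 0 ≤ β)
    (hν : ∀ a, 0 < ν a) (hμ0 : ∀ z, 0 ≤ μ z)
    (hmarg1 : ∀ a, (∑ b, μ (a, b)) = ν a) (hmarg2 : ∀ b, (∑ a, μ (a, b)) = ν b)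
    (hdiag : ∀ a, (1 - β) * ν a ≤ μ (a, a))
    (g : (Fin n → Fin m) → ℝ) (A : Finset (Fin n)) (k : Fin n) (hk : k ∉ A) :
    |QA μ ν g (insert k A) - QA μ ν g A| ≤ 2 * β * ∑ x, (∏ j, ν (x j)) * g x ^ 2 := by
  rw [qa_insert μ ν g A k hk]
  set nrm := ∑ x, (∏ j, ν (x j)) * g x ^ 2 with hnrm
  have hnrm0 : 0 ≤ nrm :=
    Finset.sum_nonneg fun x _ => mul_nonneg (Finset.prod_nonneg fun j _ => (hν _).le) (sq_nonneg _)
  set P : (Fin n → Fin m) → (Fin n → Fin m) → ℝ :=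
    fun x y => ∏ j ∈ Finset.univ.erase k, cK μ ν A j (x j) (y j) with hP
  have hP0 : ∀ x y, 0 ≤ P x y := fun x y =>
    Finset.prod_nonneg fun j _ => cK_nonneg μ ν hν hμ0 A j _ _
  set E : (Fin n → Fin m) → (Fin n → Fin m) → ℝ :=
    fun x y => |μ (x k, y k) - dk ν (x k) (y k)| with hE
  have hE0 : ∀ x y, 0 ≤ E x y := fun x y => abs_nonneg _
  -- row sums
  have hrow : ∀ x : Fin n → Fin m,
      ∑ y : Fin n → Fin m, E x y * P x y ≤ 2 * β * ∏ j, ν (x j) := by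
    intro x
    set c3 : Fin n → Fin m → ℝ :=
      fun j b => if j = k then |μ (x k, b) - dk ν (x k) b| else cK μ ν A j (x j) b with hc3
    have hsplit : ∀ y : Fin n → Fin m, E x y * P x y = ∏ j, c3 j (y j) := by
      intro y
      rw [prod_split c3 y k]
      congr 1
      · simp [hc3, hE]
      · exact Finset.prod_congr rfl fun j hj => by simp [hc3, (Finset.mem_erase.1 hj).1]
    calc ∑ y : Fin n → Fin m, E x y * P x y
        = ∑ y : Fin n → Fin m, ∏ j, c3 j (y j) := Finset.sum_congr rfl fun y _ => hsplit y
      _ = ∏ j, ∑ b, c3 j b := (Fintype.prod_sum (fun j b => c3 j b)).symm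
      _ = (∑ b, |μ (x k, b) - dk ν (x k) b|) * ∏ j ∈ Finset.univ.erase k, ν (x j) := by
          rw [← Finset.mul_prod_erase Finset.univ (fun j => ∑ b, c3 j b) (Finset.mem_univ k)]
          congr 1
          · exact Finset.sum_congr rfl fun b _ => by simp [hc3]
          · refine Finset.prod_congr rfl fun j hj => ?_
            have hjk := (Finset.mem_erase.1 hj).1
            calc ∑ b, c3 j b = ∑ b, cK μ ν A j (x j) b :=
                  Finset.sum_congr rfl fun b _ => by simp [hc3, hjk]
              _ = ν (x j) := cK_row μ ν hmarg1 A j (x j)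
      _ ≤ (2 * β * ν (x k)) * ∏ j ∈ Finset.univ.erase k, ν (x j) := by
          apply mul_le_mul_of_nonneg_right (e_row μ ν β hμ0 hmarg1 hdiag (x k))
          exact Finset.prod_nonneg fun j _ => (hν _).le
      _ = 2 * β * ∏ j, ν (x j) := by
          rw [prod_split (fun _ => ν) x k]
          ring
  -- column sums
  have hcol : ∀ y : Fin n → Fin m,
      ∑ x : Fin n → Fin m, E x y * P x y ≤ 2 * β * ∏ j, ν (y j) := by
    intro y
    set c4 : Fin n → Fin m → ℝ :=
      fun j a => if j = k then |μ (a, y k) - dk ν a (y k)| else cK μ ν A j a (y j) with hc4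
    have hsplit : ∀ x : Fin n → Fin m, E x y * P x y = ∏ j, c4 j (x j) := by
      intro x
      rw [prod_split c4 x k]
      congr 1
      · simp [hc4, hE]
      · exact Finset.prod_congr rfl fun j hj => by simp [hc4, (Finset.mem_erase.1 hj).1]
    calc ∑ x : Fin n → Fin m, E x y * P x y
        = ∑ x : Fin n → Fin m, ∏ j, c4 j (x j) := Finset.sum_congr rfl fun x _ => hsplit x
      _ = ∏ j, ∑ a, c4 j a := (Fintype.prod_sum (fun j a => c4 j a)).symm
      _ = (∑ a, |μ (a, y k) - dk ν a (y k)|) * ∏ j ∈ Finset.univ.erase k, ν (y j) := by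
          rw [← Finset.mul_prod_erase Finset.univ (fun j => ∑ a, c4 j a) (Finset.mem_univ k)]
          congr 1
          · exact Finset.sum_congr rfl fun a _ => by simp [hc4]
          · refine Finset.prod_congr rfl fun j hj => ?_
            have hjk := (Finset.mem_erase.1 hj).1
            calc ∑ a, c4 j a = ∑ a, cK μ ν A j a (y j) :=
                  Finset.sum_congr rfl fun a _ => by simp [hc4, hjk]
              _ = ν (y j) := cK_col μ ν hmarg2 A j (y j)
      _ ≤ (2 * β * ν (y k)) * ∏ j ∈ Finset.univ.erase k, ν (y j) := by
          apply mul_le_mul_of_nonneg_right (e_col μ ν β hμ0 hmarg1 hmarg2 hdiag (y k))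
          exact Finset.prod_nonneg fun j _ => (hν _).le
      _ = 2 * β * ∏ j, ν (y j) := by
          rw [prod_split (fun _ => ν) y k]
          ring
  -- main estimate
  have habs : |∑ y : Fin n → Fin m, ∑ x : Fin n → Fin m,
      ((μ (x k, y k) - dk ν (x k) (y k)) * P x y) * (g x * g y)|
      ≤ ∑ y : Fin n → Fin m, ∑ x : Fin n → Fin m, E x y * P x y * ((g x ^ 2 + g y ^ 2) / 2) := by
    refine (Finset.abs_sum_le_sum_abs _ _).trans ?_
    refine Finset.sum_le_sum fun y _ => ?_
    refine (Finset.abs_sum_le_sum_abs _ _).trans ?_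
    refine Finset.sum_le_sum fun x _ => ?_
    rw [abs_mul, abs_mul, abs_of_nonneg (hP0 x y)]
    exact mul_le_mul_of_nonneg_left (abs_mul_le_half _ _)
      (mul_nonneg (abs_nonneg _) (hP0 x y))
  refine habs.trans ?_
  have hsplit2 : ∑ y : Fin n → Fin m, ∑ x : Fin n → Fin m,
      E x y * P x y * ((g x ^ 2 + g y ^ 2) / 2)
      = ((∑ y : Fin n → Fin m, ∑ x : Fin n → Fin m, E x y * P x y * g x ^ 2)
        + ∑ y : Fin n → Fin m, ∑ x : Fin n → Fin m, E x y * P x y * g y ^ 2) / 2 := by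
    have h1 : ∀ y : Fin n → Fin m, (∑ x : Fin n → Fin m, E x y * P x y * ((g x ^ 2 + g y ^ 2) / 2))
        = ((∑ x : Fin n → Fin m, E x y * P x y * g x ^ 2)
            + ∑ x : Fin n → Fin m, E x y * P x y * g y ^ 2) / 2 := by
      intro y
      rw [← Finset.sum_add_distrib, eq_div_iff (by norm_num : (2:ℝ) ≠ 0), Finset.sum_mul]
      refine Finset.sum_congr rfl fun x _ => ?_
      ring
    calc ∑ y : Fin n → Fin m, ∑ x : Fin n → Fin m, E x y * P x y * ((g x ^ 2 + g y ^ 2) / 2)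
        = ∑ y : Fin n → Fin m, ((∑ x : Fin n → Fin m, E x y * P x y * g x ^ 2)
            + ∑ x : Fin n → Fin m, E x y * P x y * g y ^ 2) / 2 :=
          Finset.sum_congr rfl fun y _ => h1 y
      _ = _ := by rw [← Finset.sum_div, Finset.sum_add_distrib]
  rw [hsplit2]
  have hX : ∑ y : Fin n → Fin m, ∑ x : Fin n → Fin m, E x y * P x y * g x ^ 2
      ≤ 2 * β * nrm := by
    rw [Finset.sum_comm]
    calc ∑ x : Fin n → Fin m, ∑ y : Fin n → Fin m, E x y * P x y * g x ^ 2
        = ∑ x : Fin n → Fin m, (∑ y : Fin n → Fin m, E x y * P x y) * g x ^ 2 := by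
          refine Finset.sum_congr rfl fun x _ => ?_
          rw [Finset.sum_mul]
      _ ≤ ∑ x : Fin n → Fin m, (2 * β * ∏ j, ν (x j)) * g x ^ 2 :=
          Finset.sum_le_sum fun x _ => mul_le_mul_of_nonneg_right (hrow x) (sq_nonneg _)
      _ = 2 * β * nrm := by
          rw [hnrm, Finset.mul_sum]
          exact Finset.sum_congr rfl fun x _ => by ring
  have hY : ∑ y : Fin n → Fin m, ∑ x : Fin n → Fin m, E x y * P x y * g y ^ 2
      ≤ 2 * β * nrm := by
    calc ∑ y : Fin n → Fin m, ∑ x : Fin n → Fin m, E x y * P x y * g y ^ 2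
        = ∑ y : Fin n → Fin m, (∑ x : Fin n → Fin m, E x y * P x y) * g y ^ 2 := by
          refine Finset.sum_congr rfl fun y _ => ?_
          rw [Finset.sum_mul]
      _ ≤ ∑ y : Fin n → Fin m, (2 * β * ∏ j, ν (y j)) * g y ^ 2 :=
          Finset.sum_le_sum fun y _ => mul_le_mul_of_nonneg_right (hcol y) (sq_nonneg _)
      _ = 2 * β * nrm := by
          rw [hnrm, Finset.mul_sum]
          exact Finset.sum_congr rfl fun y _ => by ring
  linarith
section Spec
variable {n m : ℕ}

private lemma qa_step_zero (μ : Fin m × Fin m → ℝ) (ν : Fin m → ℝ) (hνsum : ∑ a, ν a = 1)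
    (hmarg1 : ∀ a, (∑ b, μ (a, b)) = ν a) (g : (Fin n → Fin m) → ℝ)
    (A : Finset (Fin n)) (k : Fin n) (hk : k ∉ A)
    (hg : ∀ x a, g (Function.update x k a) = g x) :
    QA μ ν g (insert k A) = QA μ ν g A := by
  rw [← sub_eq_zero, qa_insert μ ν g A k hk]
  set c : Fin n → Fin m → Fin m → ℝ :=
    fun j a b => if j = k then μ (a, b) - dk ν a b else cK μ ν A j a b with hc
  have hsum : (∑ a, ∑ b, c k a b) = 0 := by
    have : ∀ a, ∑ b, c k a b = 0 := by
      intro a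
      calc ∑ b, c k a b = ∑ b, (μ (a, b) - dk ν a b) :=
            Finset.sum_congr rfl fun b _ => by simp [hc]
        _ = (∑ b, μ (a, b)) - ∑ b, dk ν a b := Finset.sum_sub_distrib _ _
        _ = 0 := by rw [hmarg1, dk_row]; ring
    rw [Finset.sum_congr rfl fun a _ => this a]
    simp
  have hconv : ∀ (y x : Fin n → Fin m),
      ((μ (x k, y k) - dk ν (x k) (y k)) * ∏ j ∈ Finset.univ.erase k, cK μ ν A j (x j) (y j))
        * (g x * g y) = (∏ j, c j (x j) (y j)) * (g x * g y) := by
    intro y x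
    congr 1
    rw [prod_split (fun j b => c j b (y j)) x k]
    congr 1
    · simp [hc]
    · exact Finset.prod_congr rfl fun j hj => by simp [hc, (Finset.mem_erase.1 hj).1]
  calc ∑ y : Fin n → Fin m, ∑ x : Fin n → Fin m,
        ((μ (x k, y k) - dk ν (x k) (y k)) * ∏ j ∈ Finset.univ.erase k, cK μ ν A j (x j) (y j))
          * (g x * g y)
      = ∑ y : Fin n → Fin m, ∑ x : Fin n → Fin m, (∏ j, c j (x j) (y j)) * (g x * g y) :=
        Finset.sum_congr rfl fun y _ => Finset.sum_congr rfl fun x _ => hconv y x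
    _ = 0 := cancel2 ν hνsum k c hsum g hg

private lemma qa_tele (μ : Fin m × Fin m → ℝ) (ν : Fin m → ℝ) (β : ℝ) (hβ : 0 ≤ β)
    (hν : ∀ a, 0 < ν a) (hνsum : ∑ a, ν a = 1) (hμ0 : ∀ z, 0 ≤ μ z)
    (hmarg1 : ∀ a, (∑ b, μ (a, b)) = ν a) (hmarg2 : ∀ b, (∑ a, μ (a, b)) = ν b)
    (hdiag : ∀ a, (1 - β) * ν a ≤ μ (a, a))
    (S : Finset (Fin n)) (g : (Fin n → Fin m) → ℝ)
    (hg : ∀ k, k ∉ S → ∀ x a, g (Function.update x k a) = g x)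
    (A : Finset (Fin n)) :
    (∑ x, (∏ j, ν (x j)) * g x ^ 2) - QA μ ν g A
      ≤ 2 * β * ((A ∩ S).card : ℝ) * (∑ x, (∏ j, ν (x j)) * g x ^ 2) := by
  induction A using Finset.induction_on with
  | empty => rw [qa_empty]; simp
  | @insert a A ha ih =>
    have hnrm0 : (0:ℝ) ≤ ∑ x, (∏ j, ν (x j)) * g x ^ 2 :=
      Finset.sum_nonneg fun x _ =>
        mul_nonneg (Finset.prod_nonneg fun j _ => (hν _).le) (sq_nonneg _)
    by_cases haS : a ∈ S
    · have hb := qa_step_bound μ ν β hβ hν hμ0 hmarg1 hmarg2 hdiag g A a ha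
      have hcard : (((insert a A) ∩ S).card : ℝ) = ((A ∩ S).card : ℝ) + 1 := by
        rw [Finset.insert_inter_of_mem haS, Finset.card_insert_of_notMem
          (fun hmem => ha (Finset.mem_inter.1 hmem).1)]
        push_cast
        ring
      have h1 := (abs_le.1 hb).1
      rw [hcard]
      nlinarith
    · rw [qa_step_zero μ ν hνsum hmarg1 g A a ha (hg a haS),
        Finset.insert_inter_of_notMem haS]
      exact ih

private lemma spec (μ : Fin m × Fin m → ℝ) (ν : Fin m → ℝ) (β : ℝ) (d : ℕ) (hβ : 0 < β)
    (hdβ : (d : ℝ) * β ≤ 1 / 8)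
    (hν : ∀ a, 0 < ν a) (hνsum : ∑ a, ν a = 1) (hμ0 : ∀ z, 0 ≤ μ z)
    (hmarg1 : ∀ a, (∑ b, μ (a, b)) = ν a) (hmarg2 : ∀ b, (∑ a, μ (a, b)) = ν b)
    (hdiag : ∀ a, (1 - β) * ν a ≤ μ (a, a))
    (S : Finset (Fin n)) (hcard : S.card ≤ d) (g : (Fin n → Fin m) → ℝ)
    (hgj : ∀ x y, (∀ k ∈ S, x k = y k) → g x = g y) :
    (∑ x, (∏ j, ν (x j)) * g x ^ 2) ≤ 2 * ∑ y, (∏ j, ν (y j)) * (Tmu μ ν g y) ^ 2 := by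
  set nrm := ∑ x, (∏ j, ν (x j)) * g x ^ 2 with hnrm
  set q := ∑ y, (∏ j, ν (y j)) * (Tmu μ ν g y) ^ 2 with hq
  set t := ∑ y, (∏ j, ν (y j)) * (Tmu μ ν g y * g y) with ht
  have hW0 : ∀ x : Fin n → Fin m, (0:ℝ) ≤ ∏ j, ν (x j) :=
    fun x => Finset.prod_nonneg fun j _ => (hν _).le
  have hnrm0 : 0 ≤ nrm :=
    Finset.sum_nonneg fun x _ => mul_nonneg (hW0 x) (sq_nonneg _)
  have hq0 : 0 ≤ q :=
    Finset.sum_nonneg fun y _ => mul_nonneg (hW0 y) (sq_nonneg _)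
  have hginv : ∀ k, k ∉ S → ∀ x a, g (Function.update x k a) = g x := by
    intro k hk x a
    apply hgj
    intro j hj
    rw [Function.update_of_ne]
    rintro rfl; exact hk hj
  -- t equals the full quadratic form
  have htQA : t = QA μ ν g Finset.univ := by
    rw [qa_univ, ht]
    refine Finset.sum_congr rfl fun y _ => ?_
    unfold Tmu
    rw [Finset.sum_mul, Finset.mul_sum]
    refine Finset.sum_congr rfl fun x _ => ?_
    have WK : (∏ j, ν (y j)) * ∏ j, μ (x j, y j) / ν (y j) = ∏ j, μ (x j, y j) := by
      rw [← Finset.prod_mul_distrib]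
      refine Finset.prod_congr rfl fun j _ => ?_
      rw [mul_comm, div_mul_cancel₀ _ (hν (y j)).ne']
    calc (∏ j, ν (y j)) * ((∏ j, μ (x j, y j) / ν (y j)) * g x * g y)
        = ((∏ j, ν (y j)) * ∏ j, μ (x j, y j) / ν (y j)) * (g x * g y) := by ring
      _ = (∏ j, μ (x j, y j)) * (g x * g y) := by rw [WK]
  -- lower bound on t
  have hlow : nrm - t ≤ 2 * β * (d:ℝ) * nrm := by
    have := qa_tele μ ν β hβ.le hν hνsum hμ0 hmarg1 hmarg2 hdiag S g hginv Finset.univ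
    rw [Finset.univ_inter, ← hnrm] at this
    rw [htQA]
    refine this.trans ?_
    have hc : ((S.card : ℝ)) ≤ (d : ℝ) := by exact_mod_cast hcard
    nlinarith [mul_le_mul_of_nonneg_right
      (mul_le_mul_of_nonneg_left hc (by positivity : (0:ℝ) ≤ 2 * β)) hnrm0]
  have hlow2 : (3 / 4 : ℝ) * nrm ≤ t := by nlinarith
  -- Cauchy-Schwarz : t^2 ≤ q * nrm
  have hcs : t ^ 2 ≤ q * nrm := by
    have h := Finset.sum_mul_sq_le_sq_mul_sq Finset.univ
      (fun y => Real.sqrt (∏ j, ν (y j)) * Tmu μ ν g y)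
      (fun y => Real.sqrt (∏ j, ν (y j)) * g y)
    have e1 : ∑ y : Fin n → Fin m, (Real.sqrt (∏ j, ν (y j)) * Tmu μ ν g y)
        * (Real.sqrt (∏ j, ν (y j)) * g y) = t := by
      rw [ht]
      refine Finset.sum_congr rfl fun y _ => ?_
      rw [mul_mul_mul_comm, Real.mul_self_sqrt (hW0 y)]
    have e2 : ∑ y : Fin n → Fin m, (Real.sqrt (∏ j, ν (y j)) * Tmu μ ν g y) ^ 2 = q := by
      rw [hq]
      refine Finset.sum_congr rfl fun y _ => ?_
      rw [mul_pow, Real.sq_sqrt (hW0 y)]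
    have e3 : ∑ y : Fin n → Fin m, (Real.sqrt (∏ j, ν (y j)) * g y) ^ 2 = nrm := by
      rw [hnrm]
      refine Finset.sum_congr rfl fun y _ => ?_
      rw [mul_pow, Real.sq_sqrt (hW0 y)]
    rw [e1, e2, e3] at h
    exact h
  nlinarith [sq_nonneg t, mul_nonneg hnrm0 hq0]

end Spec
/-- If `μ` on `[m]×[m]` has both marginals `ν` and `μ(a,a) ≥ (1−β)ν(a)` with `dβ ≤ 1/8`,
then for every `f : [m]^n → ℝ` (with Efron–Stein decomposition `F`) and coordinate `i`,
`I_i^{≤d}[f] ≤ 2 I_i[T_μ^{⊗n} f]`. -/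
theorem degree_influence_le_noisy_influence (n m d : ℕ) (β : ℝ) (hβ : 0 < β)
    (hdβ : (d : ℝ) * β ≤ 1 / 8)
    (ν : Fin m → ℝ) (hν : ∀ a, 0 < ν a) (hνsum : ∑ a, ν a = 1)
    (μ : Fin m × Fin m → ℝ) (hμ0 : ∀ z, 0 ≤ μ z)
    (hmarg1 : ∀ a, (∑ b, μ (a, b)) = ν a)
    (hmarg2 : ∀ b, (∑ a, μ (a, b)) = ν b)
    (hdiag : ∀ a, (1 - β) * ν a ≤ μ (a, a))
    (f : (Fin n → Fin m) → ℝ) (F : Finset (Fin n) → (Fin n → Fin m) → ℝ)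
    (hdecomp : ∀ x, f x = ∑ S : Finset (Fin n), F S x)
    (hjunta : ∀ (S : Finset (Fin n)) (x y : Fin n → Fin m),
      (∀ i ∈ S, x i = y i) → F S x = F S y)
    (horth : ∀ S T : Finset (Fin n), T ⊂ S → ∀ g : (Fin n → Fin m) → ℝ,
      (∀ x y, (∀ i ∈ T, x i = y i) → g x = g y) →
      (∑ x, (∏ j, ν (x j)) * F S x * g x) = 0)
    (i : Fin n) :
    (∑ S ∈ Finset.univ.filter (fun S : Finset (Fin n) => i ∈ S ∧ S.card ≤ d),
        ∑ x, (∏ j, ν (x j)) * F S x ^ 2) ≤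
      2 * ∑ y, (∏ j, ν (y j)) *
        ((∑ x, (∏ j, μ (x j, y j) / ν (y j)) * f x) -
          ∑ a, ν a *
            (∑ x, (∏ j, μ (x j, (Function.update y i a) j) / ν ((Function.update y i a) j)) *
              f x)) ^ 2 := by
  show (∑ S ∈ Finset.univ.filter (fun S : Finset (Fin n) => i ∈ S ∧ S.card ≤ d),
      ∑ x, (∏ j, ν (x j)) * F S x ^ 2)
    ≤ 2 * ∑ y, (∏ j, ν (y j)) * (Tmu μ ν f y - Av ν i (Tmu μ ν f) y) ^ 2
  have hW0 : ∀ x : Fin n → Fin m, (0:ℝ) ≤ ∏ j, ν (x j) :=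
    fun x => Finset.prod_nonneg fun j _ => (hν _).le
  -- pointwise mean-zero of each F S in each of its coordinates
  have hmeanF : ∀ S : Finset (Fin n), ∀ j ∈ S, ∀ x, Av ν j (F S) x = 0 := by
    intro S j hj x
    exact meanF ν hν hνsum S j hj (F S) (hjunta S)
      (fun g hgJ => horth S (S.erase j) (Finset.erase_ssubset hj) g hgJ) x
  -- T F S is a junta on S
  have hTupd : ∀ S : Finset (Fin n), ∀ j, j ∉ S → ∀ y b,
      Tmu μ ν (F S) (Function.update y j b) = Tmu μ ν (F S) y :=
    fun S j hj y b => T_upd μ ν hν hνsum hmarg2 S j hj (F S) (hjunta S) y b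
  -- T F S is mean-zero in each coordinate of S
  have hTmean : ∀ S : Finset (Fin n), ∀ j ∈ S, ∀ y, Av ν j (Tmu μ ν (F S)) y = 0 :=
    fun S j hj y => T_mean μ ν hν hνsum hmarg1 S j (F S) (hmeanF S j hj) y
  -- decomposition of T f
  have hTf : ∀ y, Tmu μ ν f y = ∑ S : Finset (Fin n), Tmu μ ν (F S) y := by
    intro y
    unfold Tmu
    calc ∑ x, (∏ j, μ (x j, y j) / ν (y j)) * f x
        = ∑ x : Fin n → Fin m, ∑ S : Finset (Fin n),
            (∏ j, μ (x j, y j) / ν (y j)) * F S x := by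
          refine Finset.sum_congr rfl fun x _ => ?_
          rw [hdecomp x, Finset.mul_sum]
      _ = ∑ S : Finset (Fin n), ∑ x : Fin n → Fin m,
            (∏ j, μ (x j, y j) / ν (y j)) * F S x := Finset.sum_comm
  -- the discrete derivative picks out the S ∋ i terms
  have hD : ∀ y, Tmu μ ν f y - Av ν i (Tmu μ ν f) y
      = ∑ S ∈ Finset.univ.filter (fun S : Finset (Fin n) => i ∈ S), Tmu μ ν (F S) y := by
    intro y
    have hAvf : Av ν i (Tmu μ ν f) y = ∑ S : Finset (Fin n), Av ν i (Tmu μ ν (F S)) y := by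
      unfold Av
      calc ∑ a, ν a * Tmu μ ν f (Function.update y i a)
          = ∑ a : Fin m, ∑ S : Finset (Fin n),
              ν a * Tmu μ ν (F S) (Function.update y i a) := by
            refine Finset.sum_congr rfl fun a _ => ?_
            rw [hTf, Finset.mul_sum]
        _ = ∑ S : Finset (Fin n), ∑ a : Fin m,
              ν a * Tmu μ ν (F S) (Function.update y i a) := Finset.sum_comm
    rw [hTf y, hAvf, ← Finset.sum_sub_distrib, Finset.sum_filter]
    refine Finset.sum_congr rfl fun S _ => ?_
    by_cases hiS : i ∈ S
    · rw [if_pos hiS, hTmean S i hiS y, sub_zero]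
    · rw [if_neg hiS]
      have hav : Av ν i (Tmu μ ν (F S)) y = Tmu μ ν (F S) y := by
        unfold Av
        calc ∑ a, ν a * Tmu μ ν (F S) (Function.update y i a)
            = ∑ a, ν a * Tmu μ ν (F S) y :=
              Finset.sum_congr rfl fun a _ => by rw [hTupd S i hiS y a]
          _ = Tmu μ ν (F S) y := by rw [← Finset.sum_mul, hνsum, one_mul]
      rw [hav, sub_self]
  -- cross terms vanish
  have horthTT : ∀ S S' : Finset (Fin n), S ≠ S' →
      ∑ y, (∏ k, ν (y k)) * (Tmu μ ν (F S) y * Tmu μ ν (F S') y) = 0 := by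
    intro S S' hne
    by_cases hss : S' ⊆ S
    · have hns : ¬ S ⊆ S' := fun h => hne (Finset.Subset.antisymm h hss)
      obtain ⟨j, hjS, hjS'⟩ := Finset.not_subset.1 hns
      have h0 := ip_zero ν hνsum j (Tmu μ ν (F S')) (Tmu μ ν (F S))
        (fun y a => hTupd S' j hjS' y a) (fun y => hTmean S j hjS y)
      calc ∑ y, (∏ k, ν (y k)) * (Tmu μ ν (F S) y * Tmu μ ν (F S') y)
          = ∑ y, (∏ k, ν (y k)) * (Tmu μ ν (F S') y * Tmu μ ν (F S) y) :=
            Finset.sum_congr rfl fun y _ => by ring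
        _ = 0 := h0
    · obtain ⟨j, hjS', hjS⟩ := Finset.not_subset.1 hss
      exact ip_zero ν hνsum j (Tmu μ ν (F S)) (Tmu μ ν (F S'))
        (fun y a => hTupd S j hjS y a) (fun y => hTmean S' j hjS' y)
  -- expanding the square
  have hsq : ∑ y, (∏ k, ν (y k)) *
        (∑ S ∈ Finset.univ.filter (fun S : Finset (Fin n) => i ∈ S), Tmu μ ν (F S) y) ^ 2
      = ∑ S ∈ Finset.univ.filter (fun S : Finset (Fin n) => i ∈ S),
          ∑ y, (∏ k, ν (y k)) * (Tmu μ ν (F S) y) ^ 2 := by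
    calc ∑ y, (∏ k, ν (y k)) *
          (∑ S ∈ Finset.univ.filter (fun S : Finset (Fin n) => i ∈ S), Tmu μ ν (F S) y) ^ 2
        = ∑ y : Fin n → Fin m, ∑ S ∈ Finset.univ.filter (fun S : Finset (Fin n) => i ∈ S),
            ∑ S' ∈ Finset.univ.filter (fun S : Finset (Fin n) => i ∈ S),
              (∏ k, ν (y k)) * (Tmu μ ν (F S) y * Tmu μ ν (F S') y) := by
          refine Finset.sum_congr rfl fun y _ => ?_
          rw [sq, Finset.sum_mul_sum, Finset.mul_sum]
          refine Finset.sum_congr rfl fun S _ => ?_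
          rw [Finset.mul_sum]
      _ = ∑ S ∈ Finset.univ.filter (fun S : Finset (Fin n) => i ∈ S),
            ∑ y : Fin n → Fin m,
              ∑ S' ∈ Finset.univ.filter (fun S : Finset (Fin n) => i ∈ S),
                (∏ k, ν (y k)) * (Tmu μ ν (F S) y * Tmu μ ν (F S') y) := Finset.sum_comm
      _ = ∑ S ∈ Finset.univ.filter (fun S : Finset (Fin n) => i ∈ S),
            ∑ S' ∈ Finset.univ.filter (fun S : Finset (Fin n) => i ∈ S),
              ∑ y : Fin n → Fin m,
                (∏ k, ν (y k)) * (Tmu μ ν (F S) y * Tmu μ ν (F S') y) :=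
          Finset.sum_congr rfl fun S _ => Finset.sum_comm
      _ = ∑ S ∈ Finset.univ.filter (fun S : Finset (Fin n) => i ∈ S),
            ∑ y, (∏ k, ν (y k)) * (Tmu μ ν (F S) y) ^ 2 := by
          refine Finset.sum_congr rfl fun S hS => ?_
          rw [Finset.sum_eq_single_of_mem S hS
            (fun S' _ hne => horthTT S S' (Ne.symm hne))]
          refine Finset.sum_congr rfl fun y _ => ?_
          ring
  -- right-hand side rewritten
  have hright : ∑ y, (∏ j, ν (y j)) * (Tmu μ ν f y - Av ν i (Tmu μ ν f) y) ^ 2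
      = ∑ S ∈ Finset.univ.filter (fun S : Finset (Fin n) => i ∈ S),
          ∑ y, (∏ k, ν (y k)) * (Tmu μ ν (F S) y) ^ 2 := by
    rw [← hsq]
    exact Finset.sum_congr rfl fun y _ => by rw [hD y]
  calc ∑ S ∈ Finset.univ.filter (fun S : Finset (Fin n) => i ∈ S ∧ S.card ≤ d),
        ∑ x, (∏ j, ν (x j)) * F S x ^ 2
      ≤ ∑ S ∈ Finset.univ.filter (fun S : Finset (Fin n) => i ∈ S ∧ S.card ≤ d),
          2 * ∑ y, (∏ j, ν (y j)) * (Tmu μ ν (F S) y) ^ 2 := by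
        refine Finset.sum_le_sum fun S hS => ?_
        have hcard := ((Finset.mem_filter.1 hS).2).2
        exact spec μ ν β d hβ hdβ hν hνsum hμ0 hmarg1 hmarg2 hdiag S hcard (F S) (hjunta S)
    _ = 2 * ∑ S ∈ Finset.univ.filter (fun S : Finset (Fin n) => i ∈ S ∧ S.card ≤ d),
          ∑ y, (∏ j, ν (y j)) * (Tmu μ ν (F S) y) ^ 2 := (Finset.mul_sum _ _ _).symm
    _ ≤ 2 * ∑ S ∈ Finset.univ.filter (fun S : Finset (Fin n) => i ∈ S),
          ∑ y, (∏ j, ν (y j)) * (Tmu μ ν (F S) y) ^ 2 := by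
        refine mul_le_mul_of_nonneg_left ?_ (by norm_num)
        refine Finset.sum_le_sum_of_subset_of_nonneg ?_ ?_
        · intro S hS
          rw [Finset.mem_filter] at hS ⊢
          exact ⟨hS.1, hS.2.1⟩
        · intro S _ _
          exact Finset.sum_nonneg fun y _ => mul_nonneg (hW0 y) (sq_nonneg _)
    _ = 2 * ∑ y, (∏ j, ν (y j)) * (Tmu μ ν f y - Av ν i (Tmu μ ν f) y) ^ 2 := by
        rw [hright]
end

section
/- Let C be a coupling of the uniform distribution on a multi-slice U_k ⊆ [m]^n and a product distribution ν^⊗n on [m]^n which is symmetric under the simultaneous S_n action, and let T_C* : L²([m]^n, ν^⊗n) → L²(U_k) be the adjoint lifting operator (T_C* g)(x) = E[g(y) | x]. Then for every A ⊆ [n] and every A-junta g on [m]^n, the function T_C* g is an A-junta on U_k. Consequently, if f : U_k → ℝ is orthogonal to all d-juntas on U_k, then T_C f = E[f(x) | y] is orthogonal to all d-juntas on ([m]^n, ν^⊗n). -/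
/-- The multi-slice `U_k ⊆ [m]^n` as a finite set. -/
def sliceSet (n m : ℕ) (k : Fin m → ℕ) : Finset (Fin n → Fin m) :=
  Finset.univ.filter fun x => ∀ j, (Finset.univ.filter fun i => x i = j).card = k j

/-- If two functions on a fintype have fibers of equal cardinality, there is a
permutation carrying one to the other. -/
lemma exists_perm_of_fiber_card_eq {α β : Type*} [Fintype α] [DecidableEq α] [DecidableEq β]
    (F G : α → β)
    (h : ∀ b, (Finset.univ.filter fun a => F a = b).card =
      (Finset.univ.filter fun a => G a = b).card) :
    ∃ σ : Equiv.Perm α, ∀ i, F (σ i) = G i := by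
  have e : ∀ b, {a // G a = b} ≃ {a // F a = b} := fun b =>
    Fintype.equivOfCardEq (by
      rw [Fintype.card_subtype, Fintype.card_subtype, h b])
  refine ⟨(Equiv.sigmaFiberEquiv G).symm.trans
    ((Equiv.sigmaCongrRight e).trans (Equiv.sigmaFiberEquiv F)), fun i => ?_⟩
  exact ((e (G i)) ⟨i, rfl⟩).2

/-- If `u, v` lie in the same multi-slice and agree on `A`, there is a permutation
fixing `A` pointwise with `u ∘ σ = v`. -/
lemma exists_perm_fixing {n m : ℕ} {k : Fin m → ℕ} {A : Finset (Fin n)}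
    {u v : Fin n → Fin m} (hu : u ∈ sliceSet n m k) (hv : v ∈ sliceSet n m k)
    (hA : ∀ i ∈ A, u i = v i) :
    ∃ σ : Equiv.Perm (Fin n), (∀ i ∈ A, σ i = i) ∧ ∀ i, u (σ i) = v i := by
  classical
  simp only [sliceSet, Finset.mem_filter, Finset.mem_univ, true_and] at hu hv
  set F : Fin n → Fin n ⊕ Fin m := fun i => if i ∈ A then Sum.inl i else Sum.inr (u i) with hF
  set G : Fin n → Fin n ⊕ Fin m := fun i => if i ∈ A then Sum.inl i else Sum.inr (v i) with hG
  have hsplit : ∀ (w : Fin n → Fin m) (j : Fin m),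
      (Finset.univ.filter fun a => w a = j ∧ a ∈ A).card
        + (Finset.univ.filter fun a => w a = j ∧ a ∉ A).card
      = (Finset.univ.filter fun a => w a = j).card := by
    intro w j
    rw [← Finset.filter_filter, ← Finset.filter_filter,
      Finset.card_filter_add_card_filter_not]
  have hcard : ∀ b, (Finset.univ.filter fun a => F a = b).card =
      (Finset.univ.filter fun a => G a = b).card := by
    rintro (i | j)
    · congr 1
      apply Finset.filter_congr
      intro a _
      by_cases ha : a ∈ A <;> simp [hF, hG, ha]
    · have hFfib : (Finset.univ.filter fun a => F a = Sum.inr j)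
          = (Finset.univ.filter fun a => u a = j ∧ a ∉ A) := by
        apply Finset.filter_congr
        intro a _
        by_cases ha : a ∈ A <;> simp [hF, ha, and_comm]
      have hGfib : (Finset.univ.filter fun a => G a = Sum.inr j)
          = (Finset.univ.filter fun a => v a = j ∧ a ∉ A) := by
        apply Finset.filter_congr
        intro a _
        by_cases ha : a ∈ A <;> simp [hG, ha, and_comm]
      have hcomm : (Finset.univ.filter fun a => u a = j ∧ a ∈ A)
          = (Finset.univ.filter fun a => v a = j ∧ a ∈ A) := by
        apply Finset.filter_congr
        intro a _
        constructor
        · rintro ⟨h1, h2⟩; exact ⟨(hA a h2) ▸ h1, h2⟩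
        · rintro ⟨h1, h2⟩; exact ⟨(hA a h2) ▸ h1, h2⟩
      have h1 := hsplit u j
      have h2 := hsplit v j
      rw [hu j] at h1
      rw [hv j] at h2
      rw [hcomm] at h1
      rw [hFfib, hGfib]
      omega
  obtain ⟨σ, hσ⟩ := exists_perm_of_fiber_card_eq F G hcard
  have hfix : ∀ i ∈ A, σ i = i := by
    intro i hi
    have := hσ i
    simp only [hG, hi, if_pos] at this
    by_cases hσi : σ i ∈ A
    · simpa [hF, hσi] using this
    · simp [hF, hσi] at this
  refine ⟨σ, hfix, fun i => ?_⟩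
  by_cases hi : i ∈ A
  · rw [hfix i hi]; exact hA i hi
  · have := hσ i
    simp only [hG, hi, if_neg, ite_false] at this
    by_cases hσi : σ i ∈ A
    · simp [hF, hσi] at this
    · simpa [hF, hσi] using this

/-- Let `C` be an `S_n`-symmetric coupling of the uniform measure on the multi-slice
`U_k` and the product measure `ν_k^⊗n`.  Then the adjoint lifting operator
`T_C* g (x) = E[g(y) | x]` maps `A`-juntas on `[m]^n` to `A`-juntas on `U_k`;
consequently, if `f : U_k → ℝ` is orthogonal to all `d`-juntas on `U_k`, then
`T_C f (y) = E[f(x) | y]` is orthogonal to all `d`-juntas on `([m]^n, ν_k^⊗n)`. -/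
theorem coupling_preserves_juntas_and_orthogonality (n m : ℕ) (k : Fin m → ℕ)
    (hn : 0 < n) (hk : ∑ j, k j = n)
    (C : (Fin n → Fin m) × (Fin n → Fin m) → ℝ)
    (hC0 : ∀ z, 0 ≤ C z)
    (hmargX : ∀ x, (∑ y, C (x, y)) =
      if x ∈ sliceSet n m k then 1 / ((sliceSet n m k).card : ℝ) else 0)
    (hmargY : ∀ y, (∑ x, C (x, y)) = ∏ i, (k (y i) : ℝ) / n)
    (hsym : ∀ (π : Equiv.Perm (Fin n)) x y, C (act π x, act π y) = C (x, y))
    (d : ℕ) :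
    ((∀ (A : Finset (Fin n)) (g : (Fin n → Fin m) → ℝ),
        (∀ u v, (∀ i ∈ A, u i = v i) → g u = g v) →
        ∀ x x', x ∈ sliceSet n m k → x' ∈ sliceSet n m k → (∀ i ∈ A, x i = x' i) →
          (∑ y, C (x, y) * g y) / (∑ y, C (x, y)) =
            (∑ y, C (x', y) * g y) / (∑ y, C (x', y))) ∧
      (∀ f : (Fin n → Fin m) → ℝ,
        (∀ h : (Fin n → Fin m) → ℝ,
          (∃ A : Finset (Fin n), A.card ≤ d ∧
            ∀ u v, u ∈ sliceSet n m k → v ∈ sliceSet n m k →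
              (∀ i ∈ A, u i = v i) → h u = h v) →
          (∑ x ∈ sliceSet n m k, (1 / ((sliceSet n m k).card : ℝ)) * f x * h x) = 0) →
        ∀ h : (Fin n → Fin m) → ℝ,
          (∃ A : Finset (Fin n), A.card ≤ d ∧
            ∀ u v, (∀ i ∈ A, u i = v i) → h u = h v) →
          (∑ y, (∏ i, (k (y i) : ℝ) / n) *
              ((∑ x, C (x, y) * f x) / ∏ i, (k (y i) : ℝ) / n) * h y) = 0)) := by
  classical
  -- Key: the (unnormalized) lift of an `A`-junta is constant on slice points agreeing on `A`.
  have key : ∀ (A : Finset (Fin n)) (h : (Fin n → Fin m) → ℝ),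
      (∀ u v, (∀ i ∈ A, u i = v i) → h u = h v) →
      ∀ u v, u ∈ sliceSet n m k → v ∈ sliceSet n m k → (∀ i ∈ A, u i = v i) →
        (∑ y, C (u, y) * h y) = (∑ y, C (v, y) * h y) := by
    intro A h hjunta u v hu hv hA
    obtain ⟨σ, hσA, hσ⟩ := exists_perm_fixing hu hv hA
    have hv' : v = act σ u := funext fun i => (hσ i).symm
    have hbij : Function.Bijective (act (m := m) σ) := by
      apply Function.bijective_iff_has_inverse.mpr
      refine ⟨act σ.symm, fun x => funext fun i => ?_, fun x => funext fun i => ?_⟩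
      · simp [act]
      · simp [act]
    have := Fintype.sum_bijective (act σ) hbij
      (fun y => C (v, act σ y) * h (act σ y)) (fun y => C (v, y) * h y) (fun y => rfl)
    rw [← this]
    apply Finset.sum_congr rfl
    intro y _
    have h1 : C (v, act σ y) = C (u, y) := by rw [hv']; exact hsym σ u y
    have h2 : h (act σ y) = h y := hjunta _ _ (fun i hi => by simp [act, hσA i hi])
    show C (u, y) * h y = C (v, act σ y) * h (act σ y)
    rw [h1, h2]
  constructor
  · intro A g hg x x' hx hx' hA
    rw [key A g hg x x' hx hx' hA, hmargX x, hmargX x', if_pos hx, if_pos hx']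
  · intro f hf h hh
    obtain ⟨A, hAd, hjunta⟩ := hh
    have step1 : ∀ y, (∏ i, (k (y i) : ℝ) / n) *
        ((∑ x, C (x, y) * f x) / ∏ i, (k (y i) : ℝ) / n) * h y
        = (∑ x, C (x, y) * f x) * h y := by
      intro y
      by_cases hp : (∏ i, (k (y i) : ℝ) / n) = 0
      · have h0 : (∑ x, C (x, y)) = 0 := by rw [hmargY y, hp]
        have hz : ∀ x, C (x, y) = 0 := fun x =>
          (Finset.sum_eq_zero_iff_of_nonneg (fun x _ => hC0 (x, y))).mp h0 x (Finset.mem_univ x)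
        have hS : (∑ x, C (x, y) * f x) = 0 :=
          Finset.sum_eq_zero fun x _ => by rw [hz x, zero_mul]
        rw [hS, hp]; ring
      · rw [mul_comm (∏ i, (k (y i) : ℝ) / n) _, div_mul_cancel₀ _ hp]
    simp only [step1]
    have swap : (∑ y, (∑ x, C (x, y) * f x) * h y)
        = ∑ x, f x * (∑ y, C (x, y) * h y) := by
      simp only [Finset.sum_mul, Finset.mul_sum]
      rw [Finset.sum_comm]
      refine Finset.sum_congr rfl fun x _ => Finset.sum_congr rfl fun y _ => by ring
    rw [swap]
    have hzero : ∀ x, x ∉ sliceSet n m k → (∑ y, C (x, y) * h y) = 0 := by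
      intro x hx
      have h0 : (∑ y, C (x, y)) = 0 := by rw [hmargX x, if_neg hx]
      have hz : ∀ y, C (x, y) = 0 := fun y =>
        (Finset.sum_eq_zero_iff_of_nonneg (fun y _ => hC0 (x, y))).mp h0 y (Finset.mem_univ y)
      exact Finset.sum_eq_zero fun y _ => by rw [hz y, zero_mul]
    have hsub : (∑ x, f x * (∑ y, C (x, y) * h y))
        = ∑ x ∈ sliceSet n m k, f x * (∑ y, C (x, y) * h y) :=
      (Finset.sum_subset (Finset.subset_univ _)
        (fun x _ hx => by rw [hzero x hx, mul_zero])).symm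
    rw [hsub]
    rcases Nat.eq_zero_or_pos (sliceSet n m k).card with hc | hc
    · rw [Finset.card_eq_zero.mp hc]
      simp
    · have hc0 : ((sliceSet n m k).card : ℝ) ≠ 0 := Nat.cast_ne_zero.mpr hc.ne'
      have horto := hf (fun x => ((sliceSet n m k).card : ℝ) * ∑ y, C (x, y) * h y)
        ⟨A, hAd, fun u v hu hv hA' => by
          rw [key A h hjunta u v hu hv hA']⟩
      rw [← horto]
      refine Finset.sum_congr rfl fun x _ => ?_
      field_simp
end
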